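/- arXiv:1404.2464 — 3 statements merged into one kernel-verified Lean document; each statement's English description precedes it below -/
import Mathlib

section
/- Consider the Copeland reduction election built from a graph G = (V, E) with |V| = n: candidates are E ∪ {p, a_1, a_2, b_1, b_2, b_3} with the party preferences as constructed (two special vertex-parties for v', v'', n−2 ordinary vertex-parties, one party P, and two parties P_1, P_2 of (n−2)/2 voters each). Then in the initial profile the Copeland^α scores satisfy s(p) = |E| + 4, s(a_1) = |E| + 2, s(a_2) = |E|, s(b_i) = 5 − i for i = 1,2,3, and s(e_i) = |E| − i + 3; hence p is the unique Copeland^α winner. -/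
namespace Stmt14

/-- Candidates: one per edge (`Sum.inl`) plus `p, a₁, a₂, b₁, b₂, b₃`. -/
abbrev Cand (m : ℕ) := Fin m ⊕ Fin 6

def pC (m : ℕ) : Cand m := Sum.inr 0
def a1 (m : ℕ) : Cand m := Sum.inr 1
def a2 (m : ℕ) : Cand m := Sum.inr 2
def b1 (m : ℕ) : Cand m := Sum.inr 3
def b2 (m : ℕ) : Cand m := Sum.inr 4
def b3 (m : ℕ) : Cand m := Sum.inr 5

/-- The edge-candidates incident to `v`, ordered by index. -/
def edgesInc (m n : ℕ) (inc : Fin m → Fin n → Bool) (v : Fin n) : List (Cand m) :=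
  ((List.finRange m).filter (fun e => inc e v)).map Sum.inl

/-- The edge-candidates not incident to `v`, ordered by index. -/
def edgesNot (m n : ℕ) (inc : Fin m → Fin n → Bool) (v : Fin n) : List (Cand m) :=
  ((List.finRange m).filter (fun e => !(inc e v))).map Sum.inl

/-- All edge-candidates `E*`, ordered by index. -/
def allEdges (m : ℕ) : List (Cand m) := (List.finRange m).map Sum.inl

/-- `E(v) ≻ A ≻ p ≻ B ≻ E* \ E(v)` (for the two special degree-1 vertices). -/
def specialPref (m n : ℕ) (inc : Fin m → Fin n → Bool) (v : Fin n) : List (Cand m) :=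
  edgesInc m n inc v ++ [a1 m, a2 m, pC m, b1 m, b2 m, b3 m] ++ edgesNot m n inc v

/-- `E(v) ≻ p ≻ B ≻ A ≻ E* \ E(v)` (for all other vertices). -/
def ordinaryPref (m n : ℕ) (inc : Fin m → Fin n → Bool) (v : Fin n) : List (Cand m) :=
  edgesInc m n inc v ++ [pC m, b1 m, b2 m, b3 m, a1 m, a2 m] ++ edgesNot m n inc v

/-- `B ≻ E* ≻ p ≻ A` (the party `P`). -/
def partyP (m : ℕ) : List (Cand m) :=
  [b1 m, b2 m, b3 m] ++ allEdges m ++ [pC m, a1 m, a2 m]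

/-- `a₁ ≻ p ≻ a₂ ≻ E* ≻ B` (the party `P₁`). -/
def partyP1 (m : ℕ) : List (Cand m) :=
  [a1 m, pC m, a2 m] ++ allEdges m ++ [b1 m, b2 m, b3 m]

/-- `E* ≻ B ≻ a₁ ≻ p ≻ a₂` (the party `P₂`). -/
def partyP2 (m : ℕ) : List (Cand m) :=
  allEdges m ++ [b1 m, b2 m, b3 m, a1 m, pC m, a2 m]

/-- The whole profile as a weighted list of preference orders: two special
vertex-parties for `v'` and `v''`, the `n − 2` ordinary vertex-parties, the
party `P`, and the parties `P₁, P₂` of `(n−2)/2` voters each. -/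
def profile (m n : ℕ) (inc : Fin m → Fin n → Bool) (v' v'' : Fin n) :
    List (ℕ × List (Cand m)) :=
  [(1, specialPref m n inc v'), (1, specialPref m n inc v'')]
    ++ (((List.finRange n).filter (fun v => decide (v ≠ v' ∧ v ≠ v''))).map
          (fun v => (1, ordinaryPref m n inc v)))
    ++ [(1, partyP m), ((n - 2) / 2, partyP1 m), ((n - 2) / 2, partyP2 m)]

/-- `N(c,d)`: the (weighted) number of voters preferring `c` to `d`. -/
def pairN {C : Type*} [DecidableEq C] (prof : List (ℕ × List C)) (c d : C) : ℕ :=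
  (prof.map (fun wl => if wl.2.idxOf c < wl.2.idxOf d then wl.1 else 0)).sum

/-- The Copeland^α score: `|B(c)| + α · |T(c)|`. -/
def copeland {C : Type*} [Fintype C] [DecidableEq C]
    (prof : List (ℕ × List C)) (α : ℚ) (c : C) : ℚ :=
  ((Finset.univ.filter (fun d => d ≠ c ∧ pairN prof c d > pairN prof d c)).card : ℚ) +
    α * ((Finset.univ.filter (fun d => d ≠ c ∧ pairN prof c d = pairN prof d c)).card : ℚ)


def idx {C : Type*} [DecidableEq C] (l : List C) (c : C) : ℕ := l.idxOf c

def ind {C : Type*} [DecidableEq C] (l : List C) (c d : C) : ℕ :=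
  if idx l c < idx l d then 1 else 0

variable {C : Type*} [DecidableEq C]

lemma idx_cons_self (a : C) (l : List C) : idx (a::l) a = 0 := List.idxOf_cons_self

lemma idx_cons_ne {a b : C} (l : List C) (h : b ≠ a) : idx (b::l) a = idx l a + 1 :=
  List.idxOf_cons_ne l h

lemma idx_append_left {c : C} {l₁ : List C} (l₂ : List C) (h : c ∈ l₁) :
    idx (l₁ ++ l₂) c = idx l₁ c := List.idxOf_append_of_mem h

lemma idx_append_right {c : C} {l₁ : List C} (l₂ : List C) (h : c ∉ l₁) :
    idx (l₁ ++ l₂) c = l₁.length + idx l₂ c := List.idxOf_append_of_notMem h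

lemma idx_lt_length {c : C} {l : List C} (h : c ∈ l) : idx l c < l.length :=
  List.idxOf_lt_length_iff.2 h

lemma idx_lt_of_mem_left {c : C} {l₁ : List C} (l₂ : List C) (h : c ∈ l₁) :
    idx (l₁ ++ l₂) c < l₁.length := by
  rw [idx_append_left _ h]; exact idx_lt_length h

lemma length_le_idx {c : C} {l₁ : List C} (l₂ : List C) (h : c ∉ l₁) :
    l₁.length ≤ idx (l₁ ++ l₂) c := by
  rw [idx_append_right _ h]; omega

lemma idx_lt_of_pairwise {r : C → C → Prop} {l : List C} (hl : l.Pairwise r) {a b : C}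
    (ha : a ∈ l) (hb : b ∈ l) (hne : a ≠ b) (hnr : ¬ r b a) : idx l a < idx l b := by
  induction l with
  | nil => simp at ha
  | cons x t ih =>
    rcases List.pairwise_cons.1 hl with ⟨hx, ht⟩
    by_cases hxa : x = a
    · subst hxa
      have hxb : x ≠ b := hne
      rw [idx_cons_self, idx_cons_ne _ hxb]
      omega
    · have ha' : a ∈ t := by
        rcases List.mem_cons.1 ha with h | h
        · exact absurd h.symm hxa
        · exact h
      have hxb : x ≠ b := by rintro rfl; exact hnr (hx a ha')
      have hb' : b ∈ t := by
        rcases List.mem_cons.1 hb with h | h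
        · exact absurd h.symm hxb
        · exact h
      rw [idx_cons_ne _ hxa, idx_cons_ne _ hxb]
      exact Nat.succ_lt_succ (ih ht ha' hb')

lemma ind_add_ind {c d : C} {l : List C} (hc : c ∈ l) (hd : d ∈ l) (hne : c ≠ d) :
    ind l c d + ind l d c = 1 := by
  have h : idx l c ≠ idx l d := fun h => hne ((List.idxOf_inj hc).1 h)
  unfold ind
  split_ifs <;> omega

lemma sum_map_filter {α : Type*} (l : List α) (p : α → Bool) (g : α → ℕ) :
    ((l.filter p).map g).sum = (l.map (fun a => if p a then g a else 0)).sum := by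
  induction l with
  | nil => rfl
  | cons x t ih => by_cases h : p x <;> simp [List.filter_cons, h, ih]

lemma length_filter_eq_sum {α : Type*} (l : List α) (p : α → Bool) :
    (l.filter p).length = (l.map (fun a => if p a then 1 else 0)).sum := by
  induction l with
  | nil => rfl
  | cons x t ih => by_cases h : p x <;> simp [List.filter_cons, h, ih] <;> omega

section Vertices

variable {n : ℕ} {v' v'' : Fin n}

lemma sum_split (hvv : v' ≠ v'') (f : Fin n → ℕ) :
    ∑ v, f v = f v' + f v'' +
      ∑ v ∈ Finset.univ.filter (fun v : Fin n => v ≠ v' ∧ v ≠ v''), f v := by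
  have h1 : Finset.univ.filter (fun v : Fin n => v ≠ v' ∧ v ≠ v'')
      = (Finset.univ.erase v').erase v'' := by
    ext x; simp [and_comm]
  have h2 : v'' ∈ Finset.univ.erase v' := Finset.mem_erase.2 ⟨hvv.symm, Finset.mem_univ _⟩
  rw [h1, ← Finset.add_sum_erase _ f (Finset.mem_univ v'), ← Finset.add_sum_erase _ f h2]
  ring

lemma card_ordinary (hvv : v' ≠ v'') :
    (Finset.univ.filter (fun v : Fin n => v ≠ v' ∧ v ≠ v'')).card = n - 2 := by
  have h := sum_split hvv (fun _ => 1)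
  rw [Finset.sum_const, Finset.sum_const, smul_eq_mul, smul_eq_mul, mul_one, mul_one,
    Finset.card_univ, Fintype.card_fin] at h
  omega

end Vertices

section CandLemmas

variable {m n : ℕ} {inc : Fin m → Fin n → Bool} {v : Fin n}

lemma mem_edgesInc {e : Fin m} : (Sum.inl e : Cand m) ∈ edgesInc m n inc v ↔ inc e v = true := by
  simp [edgesInc]

lemma mem_edgesNot {e : Fin m} : (Sum.inl e : Cand m) ∈ edgesNot m n inc v ↔ inc e v = false := by
  simp [edgesNot]

lemma inr_not_mem_map (j : Fin 6) (l : List (Fin m)) :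
    (Sum.inr j : Cand m) ∉ l.map Sum.inl := by simp

lemma inl_mem_allEdges (e : Fin m) : (Sum.inl e : Cand m) ∈ allEdges m := by simp [allEdges]

lemma length_allEdges : (allEdges m).length = m := by simp [allEdges]

/-- key for sortedness of edge blocks -/
def key : Cand m → ℕ := Sum.elim Fin.val (fun _ => 0)

lemma pairwise_key {l : List (Fin m)} (h : l.Pairwise (· < ·)) :
    (l.map Sum.inl : List (Cand m)).Pairwise (fun c d => key c < key d) :=
  List.Pairwise.map _ (fun a b hab => by simpa [key] using hab) h

lemma idx_inl_lt_inl {l : List (Fin m)} (h : l.Pairwise (· < ·)) {e₁ e₂ : Fin m}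
    (h1 : e₁ ∈ l) (h2 : e₂ ∈ l) (h12 : e₁ < e₂) :
    idx (l.map Sum.inl : List (Cand m)) (Sum.inl e₁) < idx (l.map Sum.inl : List (Cand m)) (Sum.inl e₂) := by
  refine idx_lt_of_pairwise (pairwise_key h) (List.mem_map_of_mem h1)
    (List.mem_map_of_mem h2) (by simp [Fin.ne_of_lt h12]) ?_
  simp only [key, Sum.elim_inl]
  omega

lemma pairwise_filter_finRange (p : Fin m → Bool) :
    ((List.finRange m).filter p).Pairwise (· < ·) :=
  (List.pairwise_lt_finRange m).filter p

end CandLemmas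

section VertexLists

variable {m n : ℕ} {inc : Fin m → Fin n → Bool} {v : Fin n} {mid : List (Cand m)}

/-- generic vertex-style list -/
lemma idx_vl_inr (hall : ∀ j : Fin 6, (Sum.inr j : Cand m) ∈ mid) (j : Fin 6) :
    idx (edgesInc m n inc v ++ mid ++ edgesNot m n inc v) (Sum.inr j)
      = (edgesInc m n inc v).length + idx mid (Sum.inr j) := by
  rw [List.append_assoc, idx_append_right _ (by simp [edgesInc]),
    idx_append_left _ (hall j)]

lemma vl_inr_lt_inl (hall : ∀ j : Fin 6, (Sum.inr j : Cand m) ∈ mid)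
    (hninl : ∀ e : Fin m, (Sum.inl e : Cand m) ∉ mid)
    {e : Fin m} (he : inc e v = false) (j : Fin 6) :
    idx (edgesInc m n inc v ++ mid ++ edgesNot m n inc v) (Sum.inr j)
      < idx (edgesInc m n inc v ++ mid ++ edgesNot m n inc v) (Sum.inl e) := by
  have h1 : (Sum.inl e : Cand m) ∉ edgesInc m n inc v ++ mid := by
    simp [List.mem_append, mem_edgesInc, he, hninl e]
  have h2 := length_le_idx (l₁ := edgesInc m n inc v ++ mid) (edgesNot m n inc v) h1
  have h3 : (Sum.inr j : Cand m) ∈ edgesInc m n inc v ++ mid :=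
    List.mem_append.2 (Or.inr (hall j))
  have h4 := idx_lt_of_mem_left (l₁ := edgesInc m n inc v ++ mid) (edgesNot m n inc v) h3
  omega

lemma vl_inl_lt_inr (hall : ∀ j : Fin 6, (Sum.inr j : Cand m) ∈ mid)
    {e : Fin m} (he : inc e v = true) (j : Fin 6) :
    idx (edgesInc m n inc v ++ mid ++ edgesNot m n inc v) (Sum.inl e)
      < idx (edgesInc m n inc v ++ mid ++ edgesNot m n inc v) (Sum.inr j) := by
  have h1 : (Sum.inl e : Cand m) ∈ edgesInc m n inc v := mem_edgesInc.2 he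
  rw [List.append_assoc]
  have h4 := idx_lt_of_mem_left (l₁ := edgesInc m n inc v) (mid ++ edgesNot m n inc v) h1
  have h2 : (edgesInc m n inc v).length
      ≤ idx (edgesInc m n inc v ++ (mid ++ edgesNot m n inc v)) (Sum.inr j) :=
    length_le_idx _ (by simp [edgesInc])
  omega
  
lemma vl_inr_lt_inr (hall : ∀ j : Fin 6, (Sum.inr j : Cand m) ∈ mid) {j j' : Fin 6}
    (h : idx mid (Sum.inr j) < idx mid (Sum.inr j')) :
    idx (edgesInc m n inc v ++ mid ++ edgesNot m n inc v) (Sum.inr j)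
      < idx (edgesInc m n inc v ++ mid ++ edgesNot m n inc v) (Sum.inr j') := by
  rw [idx_vl_inr hall, idx_vl_inr hall]; omega

lemma vl_inl_lt_inl (hall : ∀ j : Fin 6, (Sum.inr j : Cand m) ∈ mid)
    (hninl : ∀ e : Fin m, (Sum.inl e : Cand m) ∉ mid)
    {e₁ e₂ : Fin m} (h2 : inc e₂ v = false) (h12 : e₁ < e₂) :
    idx (edgesInc m n inc v ++ mid ++ edgesNot m n inc v) (Sum.inl e₁)
      < idx (edgesInc m n inc v ++ mid ++ edgesNot m n inc v) (Sum.inl e₂) := by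
  have hne2 : (Sum.inl e₂ : Cand m) ∉ edgesInc m n inc v ++ mid := by
    simp [List.mem_append, mem_edgesInc, h2, hninl e₂]
  by_cases h1 : inc e₁ v
  · have := idx_lt_of_mem_left (l₁ := edgesInc m n inc v ++ mid) (edgesNot m n inc v)
      (List.mem_append.2 (Or.inl (mem_edgesInc.2 h1)))
    have h2' := length_le_idx (l₁ := edgesInc m n inc v ++ mid) (edgesNot m n inc v) hne2
    omega
  · have hne1 : (Sum.inl e₁ : Cand m) ∉ edgesInc m n inc v ++ mid := by
      simp [List.mem_append, mem_edgesInc, h1, hninl e₁]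
    rw [idx_append_right _ hne1, idx_append_right _ hne2]
    have : idx (edgesNot m n inc v) (Sum.inl e₁) < idx (edgesNot m n inc v) (Sum.inl e₂) := by
      unfold edgesNot
      exact idx_inl_lt_inl (pairwise_filter_finRange _)
        (by simp [h1]) (by simp [h2]) h12
    omega

end VertexLists

section Mids

variable {m : ℕ}

lemma inr_ne {j j' : Fin 6} (h : j ≠ j') : (Sum.inr j : Cand m) ≠ Sum.inr j' := by simp [h]

def specMid (m : ℕ) : List (Cand m) := [a1 m, a2 m, pC m, b1 m, b2 m, b3 m]
def ordMid (m : ℕ) : List (Cand m) := [pC m, b1 m, b2 m, b3 m, a1 m, a2 m]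
def p2Mid (m : ℕ) : List (Cand m) := [b1 m, b2 m, b3 m, a1 m, pC m, a2 m]

lemma specMid_all (j : Fin 6) : (Sum.inr j : Cand m) ∈ specMid m := by
  fin_cases j <;> simp [specMid, a1, a2, pC, b1, b2, b3]

lemma ordMid_all (j : Fin 6) : (Sum.inr j : Cand m) ∈ ordMid m := by
  fin_cases j <;> simp [ordMid, a1, a2, pC, b1, b2, b3]

lemma p2Mid_all (j : Fin 6) : (Sum.inr j : Cand m) ∈ p2Mid m := by
  fin_cases j <;> simp [p2Mid, a1, a2, pC, b1, b2, b3]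

lemma specMid_noinl (e : Fin m) : (Sum.inl e : Cand m) ∉ specMid m := by
  simp [specMid, a1, a2, pC, b1, b2, b3]

lemma ordMid_noinl (e : Fin m) : (Sum.inl e : Cand m) ∉ ordMid m := by
  simp [ordMid, a1, a2, pC, b1, b2, b3]

lemma p2Mid_noinl (e : Fin m) : (Sum.inl e : Cand m) ∉ p2Mid m := by
  simp [p2Mid, a1, a2, pC, b1, b2, b3]

lemma idx_specMid (j : Fin 6) : idx (specMid m) (Sum.inr j) = ![2, 0, 1, 3, 4, 5] j := by
  fin_cases j <;>
    simp [specMid, a1, a2, pC, b1, b2, b3, idx, List.idxOf_cons, cond_eq_if, beq_iff_eq] <;> decide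

lemma idx_ordMid (j : Fin 6) : idx (ordMid m) (Sum.inr j) = ![0, 4, 5, 1, 2, 3] j := by
  fin_cases j <;>
    simp [ordMid, a1, a2, pC, b1, b2, b3, idx, List.idxOf_cons, cond_eq_if, beq_iff_eq] <;> decide

lemma idx_p2Mid (j : Fin 6) : idx (p2Mid m) (Sum.inr j) = ![4, 3, 5, 0, 1, 2] j := by
  fin_cases j <;>
    simp [p2Mid, a1, a2, pC, b1, b2, b3, idx, List.idxOf_cons, cond_eq_if, beq_iff_eq] <;> decide

end Mids

section Parties

variable {m : ℕ}

lemma idx_allEdges_lt (e : Fin m) : idx (allEdges m) (Sum.inl e) < m := by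
  have := idx_lt_length (l := allEdges m) (c := Sum.inl e) (inl_mem_allEdges e)
  simpa [length_allEdges] using this

lemma allEdges_sorted {e₁ e₂ : Fin m} (h : e₁ < e₂) :
    idx (allEdges m) (Sum.inl e₁) < idx (allEdges m) (Sum.inl e₂) :=
  idx_inl_lt_inl (List.pairwise_lt_finRange m) (List.mem_finRange _) (List.mem_finRange _) h

-- partyP1 = ([a1,p,a2] ++ allEdges) ++ [b1,b2,b3]
lemma p1_idx_a1 : idx (partyP1 m) (a1 m) = 0 := by
  simp [partyP1, idx, a1, pC, a2, List.idxOf_cons, cond_eq_if, beq_iff_eq]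

lemma p1_idx_p : idx (partyP1 m) (pC m) = 1 := by
  simp [partyP1, idx, a1, pC, a2, List.idxOf_cons, cond_eq_if, beq_iff_eq]

lemma p1_idx_a2 : idx (partyP1 m) (a2 m) = 2 := by
  simp [partyP1, idx, a1, pC, a2, List.idxOf_cons, cond_eq_if, beq_iff_eq]

lemma p1_idx_e (e : Fin m) : idx (partyP1 m) (Sum.inl e) = 3 + idx (allEdges m) (Sum.inl e) := by
  unfold partyP1
  rw [List.append_assoc, idx_append_right _ (by simp [a1, pC, a2]),
    idx_append_left _ (inl_mem_allEdges e)]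
  simp

lemma p1_idx_b_ge (j : Fin 6) (hj : Sum.inr j = b1 m ∨ Sum.inr j = b2 m ∨ Sum.inr j = b3 m) :
    3 + m ≤ idx (partyP1 m) (Sum.inr j) := by
  unfold partyP1
  have hnot : (Sum.inr j : Cand m) ∉ [a1 m, pC m, a2 m] ++ allEdges m := by
    rcases hj with h | h | h <;>
      simp [h, b1, b2, b3, a1, pC, a2, allEdges]
  have h := length_le_idx (l₁ := [a1 m, pC m, a2 m] ++ allEdges m) [b1 m, b2 m, b3 m] hnot
  rw [List.length_append, length_allEdges] at h
  simp only [List.length_cons, List.length_nil] at h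
  omega

-- partyP2 = allEdges ++ p2Mid
lemma p2_idx_inr (j : Fin 6) : idx (partyP2 m) (Sum.inr j) = m + idx (p2Mid m) (Sum.inr j) := by
  show idx (allEdges m ++ p2Mid m) _ = _
  rw [idx_append_right _ (by simp [allEdges]), length_allEdges]

lemma p2_idx_e (e : Fin m) : idx (partyP2 m) (Sum.inl e) = idx (allEdges m) (Sum.inl e) := by
  show idx (allEdges m ++ p2Mid m) _ = _
  rw [idx_append_left _ (inl_mem_allEdges e)]

-- memberships
lemma mem_specialPref {n : ℕ} {inc : Fin m → Fin n → Bool} {v : Fin n} (c : Cand m) :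
    c ∈ specialPref m n inc v := by
  rcases c with e | j
  · by_cases h : inc e v <;>
      simp [specialPref, edgesInc, edgesNot, h]
  · fin_cases j <;> simp [specialPref, a1, a2, pC, b1, b2, b3]

lemma mem_ordinaryPref {n : ℕ} {inc : Fin m → Fin n → Bool} {v : Fin n} (c : Cand m) :
    c ∈ ordinaryPref m n inc v := by
  rcases c with e | j
  · by_cases h : inc e v <;>
      simp [ordinaryPref, edgesInc, edgesNot, h]
  · fin_cases j <;> simp [ordinaryPref, a1, a2, pC, b1, b2, b3]

lemma mem_partyP (c : Cand m) : c ∈ partyP m := by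
  rcases c with e | j
  · simp [partyP, allEdges]
  · fin_cases j <;> simp [partyP, a1, a2, pC, b1, b2, b3]

lemma mem_partyP1 (c : Cand m) : c ∈ partyP1 m := by
  rcases c with e | j
  · simp [partyP1, allEdges]
  · fin_cases j <;> simp [partyP1, a1, a2, pC, b1, b2, b3]

lemma mem_partyP2 (c : Cand m) : c ∈ partyP2 m := by
  rcases c with e | j
  · simp [partyP2, allEdges]
  · fin_cases j <;> simp [partyP2, a1, a2, pC, b1, b2, b3]

end Parties

section Profile

variable {m n : ℕ} {inc : Fin m → Fin n → Bool} {v' v'' : Fin n}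

lemma ite_weight {C : Type*} [DecidableEq C] (w : ℕ) (l : List C) (c d : C) :
    (if l.idxOf c < l.idxOf d then w else 0) = w * ind l c d := by
  unfold ind idx; split <;> simp

lemma pairN_profile (c d : Cand m) :
    pairN (profile m n inc v' v'') c d =
      ind (specialPref m n inc v') c d + ind (specialPref m n inc v'') c d +
      (∑ v ∈ Finset.univ.filter (fun v : Fin n => v ≠ v' ∧ v ≠ v''),
        ind (ordinaryPref m n inc v) c d) +
      (ind (partyP m) c d + (n - 2) / 2 * ind (partyP1 m) c d +
        (n - 2) / 2 * ind (partyP2 m) c d) := by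
  unfold profile pairN
  rw [List.map_append, List.map_append, List.sum_append, List.sum_append, List.map_map]
  simp only [List.map_cons, List.map_nil, List.sum_cons, List.sum_nil, Function.comp_def]
  rw [sum_map_filter, ← Fin.sum_univ_def, ← Finset.sum_filter]
  have hfil : (Finset.univ.filter (fun v : Fin n => decide (v ≠ v' ∧ v ≠ v'') = true))
      = Finset.univ.filter (fun v : Fin n => v ≠ v' ∧ v ≠ v'') := by
    apply Finset.filter_congr; intro x _; simp
  rw [hfil]
  simp only [ite_weight, one_mul]
  ring

lemma pairN_add_pairN {C : Type*} [DecidableEq C] (prof : List (ℕ × List C)) {c d : C}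
    (h : ∀ wl ∈ prof, c ∈ wl.2 ∧ d ∈ wl.2) (hne : c ≠ d) :
    pairN prof c d + pairN prof d c = (prof.map Prod.fst).sum := by
  induction prof with
  | nil => rfl
  | cons x t ih =>
    have hx := h x List.mem_cons_self
    have key : (if x.2.idxOf c < x.2.idxOf d then x.1 else 0)
        + (if x.2.idxOf d < x.2.idxOf c then x.1 else 0) = x.1 := by
      have h2 := ind_add_ind hx.1 hx.2 hne
      unfold ind idx at h2
      split_ifs at h2 ⊢ <;> omega
    have ih' := ih (fun wl hwl => h wl (List.mem_cons_of_mem x hwl))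
    simp only [pairN, List.map_cons, List.sum_cons] at *
    omega

lemma length_ordList (hvv : v' ≠ v'') :
    ((List.finRange n).filter (fun v => decide (v ≠ v' ∧ v ≠ v''))).length = n - 2 := by
  rw [length_filter_eq_sum, ← Fin.sum_univ_def, sum_split hvv]
  have h1 : ∀ v : Fin n, v ≠ v' → v ≠ v'' →
      (if decide (v ≠ v' ∧ v ≠ v'') = true then 1 else 0) = 1 := by
    intro v h1 h2; simp [h1, h2]
  rw [Finset.sum_congr rfl (fun v hv => by
    rcases Finset.mem_filter.1 hv with ⟨_, hv1, hv2⟩; exact h1 v hv1 hv2)]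
  simp [card_ordinary hvv]

end Profile

section Total

variable {m n : ℕ} {inc : Fin m → Fin n → Bool} {v' v'' : Fin n}

lemma total_weight (hvv : v' ≠ v'') (h2 : 2 ∣ n) (hn : 6 ≤ n) :
    ((profile m n inc v' v'').map Prod.fst).sum = 2 * n - 1 := by
  unfold profile
  rw [List.map_append, List.map_append, List.sum_append, List.sum_append, List.map_map]
  simp only [List.map_cons, List.map_nil, List.sum_cons, List.sum_nil, Function.comp_def]
  have e1 : (((List.finRange n).filter (fun v => decide (v ≠ v' ∧ v ≠ v''))).map
      (fun v => ((1 : ℕ), ordinaryPref m n inc v).1)).sum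
      = (((List.finRange n).filter (fun v => decide (v ≠ v' ∧ v ≠ v''))).map
          (fun _ => (1 : ℕ))).sum := rfl
  rw [e1, List.map_const', List.sum_replicate, length_ordList hvv]
  simp only [smul_eq_mul, mul_one]
  omega

lemma pairN_compl (hvv : v' ≠ v'') (h2 : 2 ∣ n) (hn : 6 ≤ n) {c d : Cand m} (hne : c ≠ d) :
    pairN (profile m n inc v' v'') c d + pairN (profile m n inc v' v'') d c = 2 * n - 1 := by
  have h := pairN_add_pairN (profile m n inc v' v'')
    (fun wl hwl => by
      unfold profile at hwl
      simp only [List.mem_append, List.mem_cons, List.mem_map, List.mem_singleton] at hwl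
      rcases hwl with ((rfl | rfl | h0) | ⟨v, _, rfl⟩) | (rfl | rfl | rfl | h0) <;>
        first
          | exact ⟨mem_specialPref c, mem_specialPref d⟩
          | exact ⟨mem_ordinaryPref c, mem_ordinaryPref d⟩
          | exact ⟨mem_partyP c, mem_partyP d⟩
          | exact ⟨mem_partyP1 c, mem_partyP1 d⟩
          | exact ⟨mem_partyP2 c, mem_partyP2 d⟩
          | simp at h0) hne
  rw [h, total_weight hvv h2 hn]

end Total

section Winners

variable {m n : ℕ} {inc : Fin m → Fin n → Bool} {v' v'' : Fin n}

lemma ind_eq_one {c d : Cand m} {l : List (Cand m)} (h : idx l c < idx l d) : ind l c d = 1 :=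
  if_pos h

lemma ind_eq_zero {c d : Cand m} {l : List (Cand m)} (h : idx l d ≤ idx l c) : ind l c d = 0 :=
  if_neg (by omega)

lemma spec_eq {v : Fin n} :
    specialPref m n inc v = edgesInc m n inc v ++ specMid m ++ edgesNot m n inc v := rfl

lemma ord_eq {v : Fin n} :
    ordinaryPref m n inc v = edgesInc m n inc v ++ ordMid m ++ edgesNot m n inc v := rfl

lemma p2_eq : partyP2 m = allEdges m ++ p2Mid m := rfl

-- wrappers for specialPref
lemma spec_rr {v : Fin n} {j j' : Fin 6} (h : ![2,0,1,3,4,5] j < ![2,0,1,3,4,5] j') :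
    idx (specialPref m n inc v) (Sum.inr j) < idx (specialPref m n inc v) (Sum.inr j') := by
  rw [spec_eq]
  exact vl_inr_lt_inr specMid_all (by rw [idx_specMid, idx_specMid]; exact h)

lemma ord_rr {v : Fin n} {j j' : Fin 6} (h : ![0,4,5,1,2,3] j < ![0,4,5,1,2,3] j') :
    idx (ordinaryPref m n inc v) (Sum.inr j) < idx (ordinaryPref m n inc v) (Sum.inr j') := by
  rw [ord_eq]
  exact vl_inr_lt_inr ordMid_all (by rw [idx_ordMid, idx_ordMid]; exact h)

lemma spec_re {v : Fin n} {e : Fin m} (he : inc e v = false) (j : Fin 6) :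
    idx (specialPref m n inc v) (Sum.inr j) < idx (specialPref m n inc v) (Sum.inl e) := by
  rw [spec_eq]; exact vl_inr_lt_inl specMid_all specMid_noinl he j

lemma ord_re {v : Fin n} {e : Fin m} (he : inc e v = false) (j : Fin 6) :
    idx (ordinaryPref m n inc v) (Sum.inr j) < idx (ordinaryPref m n inc v) (Sum.inl e) := by
  rw [ord_eq]; exact vl_inr_lt_inl ordMid_all ordMid_noinl he j

lemma spec_er {v : Fin n} {e : Fin m} (he : inc e v = true) (j : Fin 6) :
    idx (specialPref m n inc v) (Sum.inl e) < idx (specialPref m n inc v) (Sum.inr j) := by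
  rw [spec_eq]; exact vl_inl_lt_inr specMid_all he j

lemma ord_er {v : Fin n} {e : Fin m} (he : inc e v = true) (j : Fin 6) :
    idx (ordinaryPref m n inc v) (Sum.inl e) < idx (ordinaryPref m n inc v) (Sum.inr j) := by
  rw [ord_eq]; exact vl_inl_lt_inr ordMid_all he j

lemma spec_ee {v : Fin n} {e₁ e₂ : Fin m} (h2 : inc e₂ v = false) (h12 : e₁ < e₂) :
    idx (specialPref m n inc v) (Sum.inl e₁) < idx (specialPref m n inc v) (Sum.inl e₂) := by
  rw [spec_eq]; exact vl_inl_lt_inl specMid_all specMid_noinl h2 h12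

lemma ord_ee {v : Fin n} {e₁ e₂ : Fin m} (h2 : inc e₂ v = false) (h12 : e₁ < e₂) :
    idx (ordinaryPref m n inc v) (Sum.inl e₁) < idx (ordinaryPref m n inc v) (Sum.inl e₂) := by
  rw [ord_eq]; exact vl_inl_lt_inl ordMid_all ordMid_noinl h2 h12

-- wrappers for partyP2
lemma p2_rr {j j' : Fin 6} (h : ![4,3,5,0,1,2] j < ![4,3,5,0,1,2] j') :
    idx (partyP2 m) (Sum.inr j) < idx (partyP2 m) (Sum.inr j') := by
  rw [p2_idx_inr, p2_idx_inr, idx_p2Mid, idx_p2Mid]; omega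

lemma p2_er (e : Fin m) (j : Fin 6) :
    idx (partyP2 m) (Sum.inl e) < idx (partyP2 m) (Sum.inr j) := by
  rw [p2_idx_inr, p2_idx_e]
  have := idx_allEdges_lt e
  omega

lemma p2_ee {e₁ e₂ : Fin m} (h : e₁ < e₂) :
    idx (partyP2 m) (Sum.inl e₁) < idx (partyP2 m) (Sum.inl e₂) := by
  rw [p2_idx_e, p2_idx_e]; exact allEdges_sorted h

-- wrappers for partyP1
lemma p1_idx_b (j : Fin 6) (hj : j = 3 ∨ j = 4 ∨ j = 5) :
    idx (partyP1 m) (Sum.inr j) = 3 + m + idx ([b1 m, b2 m, b3 m] : List (Cand m)) (Sum.inr j) := by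
  unfold partyP1
  rw [List.append_assoc, idx_append_right _ (by rcases hj with rfl | rfl | rfl <;> simp [a1, pC, a2]),
    idx_append_right _ (by simp [allEdges])]
  simp [length_allEdges]
  omega

lemma p1_re {j : Fin 6} (hj : j = 0 ∨ j = 1 ∨ j = 2) (e : Fin m) :
    idx (partyP1 m) (Sum.inr j) < idx (partyP1 m) (Sum.inl e) := by
  have h1 : idx (partyP1 m) (Sum.inr j) ≤ 2 := by
    rcases hj with rfl | rfl | rfl
    · rw [show (Sum.inr (0 : Fin 6) : Cand m) = pC m from rfl, p1_idx_p] <;> omega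
    · rw [show (Sum.inr (1 : Fin 6) : Cand m) = a1 m from rfl, p1_idx_a1] <;> omega
    · rw [show (Sum.inr (2 : Fin 6) : Cand m) = a2 m from rfl, p1_idx_a2] <;> omega
  rw [p1_idx_e]
  omega

lemma p1_eb (e : Fin m) {j : Fin 6} (hj : j = 3 ∨ j = 4 ∨ j = 5) :
    idx (partyP1 m) (Sum.inl e) < idx (partyP1 m) (Sum.inr j) := by
  have h1 := p1_idx_b_ge (m := m) j (by
    rcases hj with rfl | rfl | rfl
    · exact Or.inl rfl
    · exact Or.inr (Or.inl rfl)
    · exact Or.inr (Or.inr rfl))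
  rw [p1_idx_e]
  have := idx_allEdges_lt e
  omega

lemma p1_ee {e₁ e₂ : Fin m} (h : e₁ < e₂) :
    idx (partyP1 m) (Sum.inl e₁) < idx (partyP1 m) (Sum.inl e₂) := by
  rw [p1_idx_e, p1_idx_e]
  have := allEdges_sorted (m := m) h
  omega

lemma p1_bb {j j' : Fin 6} (hj : j = 3 ∨ j = 4 ∨ j = 5) (hj' : j' = 3 ∨ j' = 4 ∨ j' = 5)
    (h : j < j') :
    idx (partyP1 m) (Sum.inr j) < idx (partyP1 m) (Sum.inr j') := by
  rw [p1_idx_b j hj, p1_idx_b j' hj']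
  have : idx ([b1 m, b2 m, b3 m] : List (Cand m)) (Sum.inr j)
      < idx ([b1 m, b2 m, b3 m] : List (Cand m)) (Sum.inr j') := by
    rcases hj with rfl | rfl | rfl <;> rcases hj' with rfl | rfl | rfl <;>
      first
        | exact absurd h (by decide)
        | simp [b1, b2, b3, idx, List.idxOf_cons, cond_eq_if, beq_iff_eq]
  omega

end Winners

section Bounds

variable {m n : ℕ} {inc : Fin m → Fin n → Bool} {v' v'' : Fin n}

lemma sum_inc (hedge : ∀ e : Fin m, ((List.finRange n).filter (fun v => inc e v)).length = 2)
    (e : Fin m) : ∑ v : Fin n, (if inc e v = true then 1 else 0) = 2 := by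
  have h := hedge e
  rw [length_filter_eq_sum, ← Fin.sum_univ_def] at h
  exact h

lemma sum_ninc (hedge : ∀ e : Fin m, ((List.finRange n).filter (fun v => inc e v)).length = 2)
    (e : Fin m) : ∑ v : Fin n, (if inc e v = false then 1 else 0) = n - 2 := by
  have h1 := sum_inc hedge e
  have h2 : ∑ v : Fin n, ((if inc e v = true then 1 else 0) + (if inc e v = false then 1 else 0))
      = ∑ _v : Fin n, 1 :=
    Finset.sum_congr rfl (fun v _ => by cases hv : inc e v <;> simp [hv])
  rw [Finset.sum_add_distrib, Finset.sum_const, Finset.card_univ, Fintype.card_fin,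
    smul_eq_mul, mul_one] at h2
  omega

lemma vertex_ge (hvv : v' ≠ v'') (c d : Cand m) (f : Fin n → ℕ)
    (hs : ∀ v, f v ≤ ind (specialPref m n inc v) c d)
    (ho : ∀ v, f v ≤ ind (ordinaryPref m n inc v) c d) :
    ∑ v, f v ≤ ind (specialPref m n inc v') c d + ind (specialPref m n inc v'') c d +
      ∑ v ∈ Finset.univ.filter (fun v : Fin n => v ≠ v' ∧ v ≠ v''),
        ind (ordinaryPref m n inc v) c d := by
  rw [sum_split hvv f]
  have hsum := Finset.sum_le_sum
    (s := Finset.univ.filter (fun v : Fin n => v ≠ v' ∧ v ≠ v'')) (fun v _ => ho v)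
  have h1 := hs v'
  have h2 := hs v''
  omega

lemma sum_ord (hvv : v' ≠ v'') {c d : Cand m}
    (h : ∀ v : Fin n, ind (ordinaryPref m n inc v) c d = 1) :
    ∑ v ∈ Finset.univ.filter (fun v : Fin n => v ≠ v' ∧ v ≠ v''),
      ind (ordinaryPref m n inc v) c d = n - 2 := by
  rw [Finset.sum_congr rfl (fun v _ => h v)]
  simp [card_ordinary hvv]

variable (hvv : v' ≠ v'') (h2 : 2 ∣ n) (hn : 6 ≤ n)
  (hedge : ∀ e : Fin m, ((List.finRange n).filter (fun v => inc e v)).length = 2)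

include hvv h2 hn hedge

-- W1 : a1 beats p
lemma w_a1_p : n ≤ pairN (profile m n inc v' v'') ((Sum.inr 1 : Cand m)) (Sum.inr 0) := by
  rw [pairN_profile]
  try simp only [pC, a1, a2, b1, b2, b3]
  rw [ind_eq_one (spec_rr (v := v') (by decide)), ind_eq_one (spec_rr (v := v'') (by decide)),
    ind_eq_one (show idx (partyP1 m) (Sum.inr (1 : Fin 6) : Cand m) < idx (partyP1 m) (Sum.inr 0) by
      have ha : idx (partyP1 m) (Sum.inr (1 : Fin 6) : Cand m) = 0 := p1_idx_a1
      have hp : idx (partyP1 m) (Sum.inr (0 : Fin 6) : Cand m) = 1 := p1_idx_p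
      omega),
    ind_eq_one (p2_rr (by decide))]
  omega

-- W2 : p beats a2
lemma w_p_a2 : n ≤ pairN (profile m n inc v' v'') ((Sum.inr 0 : Cand m)) (Sum.inr 2) := by
  rw [pairN_profile]
  try simp only [pC, a1, a2, b1, b2, b3]
  rw [sum_ord hvv (fun v => ind_eq_one (ord_rr (by decide))),
    ind_eq_one (show idx (partyP1 m) (Sum.inr (0 : Fin 6) : Cand m) < idx (partyP1 m) (Sum.inr 2) by
      have ha : idx (partyP1 m) (Sum.inr (2 : Fin 6) : Cand m) = 2 := p1_idx_a2
      have hp : idx (partyP1 m) (Sum.inr (0 : Fin 6) : Cand m) = 1 := p1_idx_p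
      omega),
    ind_eq_one (p2_rr (by decide))]
  omega

-- W3 : p beats b (j = 3,4,5)
lemma w_p_b {j : Fin 6} (hj : j = 3 ∨ j = 4 ∨ j = 5) :
    n ≤ pairN (profile m n inc v' v'') ((Sum.inr 0 : Cand m)) (Sum.inr j) := by
  rw [pairN_profile]
  try simp only [pC, a1, a2, b1, b2, b3]
  rw [ind_eq_one (spec_rr (v := v') (by rcases hj with rfl | rfl | rfl <;> decide)),
    ind_eq_one (spec_rr (v := v'') (by rcases hj with rfl | rfl | rfl <;> decide)),
    sum_ord hvv (fun v => ind_eq_one (ord_rr (by rcases hj with rfl | rfl | rfl <;> decide)))]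
  omega

-- W4 : p beats every edge
lemma w_p_e (e : Fin m) : n ≤ pairN (profile m n inc v' v'') ((Sum.inr 0 : Cand m)) (Sum.inl e) := by
  rw [pairN_profile]
  try simp only [pC, a1, a2, b1, b2, b3]
  have hs : ∀ v, (if inc e v = false then 1 else 0)
      ≤ ind (specialPref m n inc v) (Sum.inr 0) (Sum.inl e) := by
    intro v
    by_cases h : inc e v = false
    · rw [if_pos h, ind_eq_one (spec_re h 0)]
    · rw [if_neg h]; exact Nat.zero_le _
  have ho : ∀ v, (if inc e v = false then 1 else 0)
      ≤ ind (ordinaryPref m n inc v) (Sum.inr 0) (Sum.inl e) := by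
    intro v
    by_cases h : inc e v = false
    · rw [if_pos h, ind_eq_one (ord_re h 0)]
    · rw [if_neg h]; exact Nat.zero_le _
  have hv := vertex_ge (inc := inc) hvv (Sum.inr 0) (Sum.inl e)
    (fun v => if inc e v = false then 1 else 0) hs ho
  rw [sum_ninc hedge e] at hv
  rw [ind_eq_one (p1_re (Or.inl rfl) e), ind_eq_zero (le_of_lt (p2_er e 0))]
  omega

-- W5 : a1 beats a2
lemma w_a1_a2 : n ≤ pairN (profile m n inc v' v'') ((Sum.inr 1 : Cand m)) (Sum.inr 2) := by
  rw [pairN_profile]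
  try simp only [pC, a1, a2, b1, b2, b3]
  rw [ind_eq_one (spec_rr (v := v') (by decide)), ind_eq_one (spec_rr (v := v'') (by decide)),
    sum_ord hvv (fun v => ind_eq_one (ord_rr (by decide)))]
  omega

-- W6 : b beats a
lemma w_b_a {j j' : Fin 6} (hj : j = 3 ∨ j = 4 ∨ j = 5) (hj' : j' = 1 ∨ j' = 2) :
    n ≤ pairN (profile m n inc v' v'') (Sum.inr j) (Sum.inr j') := by
  rw [pairN_profile]
  try simp only [pC, a1, a2, b1, b2, b3]
  rw [sum_ord hvv (fun v => ind_eq_one (ord_rr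
      (by rcases hj with rfl | rfl | rfl <;> rcases hj' with rfl | rfl <;> decide))),
    ind_eq_one (p2_rr (by rcases hj with rfl | rfl | rfl <;> rcases hj' with rfl | rfl <;> decide))]
  omega

-- W7 : a beats every edge
lemma w_a_e {j : Fin 6} (hj : j = 1 ∨ j = 2) (e : Fin m) :
    n ≤ pairN (profile m n inc v' v'') (Sum.inr j) (Sum.inl e) := by
  rw [pairN_profile]
  have hs : ∀ v, (if inc e v = false then 1 else 0)
      ≤ ind (specialPref m n inc v) (Sum.inr j) (Sum.inl e) := by
    intro v
    by_cases h : inc e v = false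
    · rw [if_pos h, ind_eq_one (spec_re h j)]
    · rw [if_neg h]; exact Nat.zero_le _
  have ho : ∀ v, (if inc e v = false then 1 else 0)
      ≤ ind (ordinaryPref m n inc v) (Sum.inr j) (Sum.inl e) := by
    intro v
    by_cases h : inc e v = false
    · rw [if_pos h, ind_eq_one (ord_re h j)]
    · rw [if_neg h]; exact Nat.zero_le _
  have hv := vertex_ge (inc := inc) hvv (Sum.inr j) (Sum.inl e)
    (fun v => if inc e v = false then 1 else 0) hs ho
  rw [sum_ninc hedge e] at hv
  rw [ind_eq_one (p1_re (Or.inr hj) e)]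
  omega

-- W8 : b_i beats b_j for i < j
lemma w_b_b {j j' : Fin 6} (hj : j = 3 ∨ j = 4 ∨ j = 5) (hj' : j' = 3 ∨ j' = 4 ∨ j' = 5)
    (h : j < j') : n ≤ pairN (profile m n inc v' v'') (Sum.inr j) (Sum.inr j') := by
  rw [pairN_profile]
  try simp only [pC, a1, a2, b1, b2, b3]
  rw [ind_eq_one (spec_rr (v := v')
      (by rcases hj with rfl | rfl | rfl <;> rcases hj' with rfl | rfl | rfl <;>
        first | exact absurd h (by decide) | decide)),
    ind_eq_one (spec_rr (v := v'')
      (by rcases hj with rfl | rfl | rfl <;> rcases hj' with rfl | rfl | rfl <;>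
        first | exact absurd h (by decide) | decide)),
    sum_ord hvv (fun v => ind_eq_one (ord_rr
      (by rcases hj with rfl | rfl | rfl <;> rcases hj' with rfl | rfl | rfl <;>
        first | exact absurd h (by decide) | decide)))]
  omega

-- W9 : every edge beats every b
lemma w_e_b (e : Fin m) {j : Fin 6} (hj : j = 3 ∨ j = 4 ∨ j = 5) :
    n ≤ pairN (profile m n inc v' v'') (Sum.inl e) (Sum.inr j) := by
  rw [pairN_profile]
  have hs : ∀ v, (if inc e v = true then 1 else 0)
      ≤ ind (specialPref m n inc v) (Sum.inl e) (Sum.inr j) := by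
    intro v
    by_cases h : inc e v = true
    · rw [if_pos h, ind_eq_one (spec_er h j)]
    · rw [if_neg h]; exact Nat.zero_le _
  have ho : ∀ v, (if inc e v = true then 1 else 0)
      ≤ ind (ordinaryPref m n inc v) (Sum.inl e) (Sum.inr j) := by
    intro v
    by_cases h : inc e v = true
    · rw [if_pos h, ind_eq_one (ord_er h j)]
    · rw [if_neg h]; exact Nat.zero_le _
  have hv := vertex_ge (inc := inc) hvv (Sum.inl e) (Sum.inr j)
    (fun v => if inc e v = true then 1 else 0) hs ho
  rw [sum_inc hedge e] at hv
  rw [ind_eq_one (p1_eb e hj), ind_eq_one (p2_er e j)]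
  omega

-- W10 : e_i beats e_j for i < j
lemma w_e_e {e₁ e₂ : Fin m} (h : e₁ < e₂) :
    n ≤ pairN (profile m n inc v' v'') (Sum.inl e₁) (Sum.inl e₂) := by
  rw [pairN_profile]
  have hs : ∀ v, (if inc e₂ v = false then 1 else 0)
      ≤ ind (specialPref m n inc v) (Sum.inl e₁) (Sum.inl e₂) := by
    intro v
    by_cases hb : inc e₂ v = false
    · rw [if_pos hb, ind_eq_one (spec_ee hb h)]
    · rw [if_neg hb]; exact Nat.zero_le _
  have ho : ∀ v, (if inc e₂ v = false then 1 else 0)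
      ≤ ind (ordinaryPref m n inc v) (Sum.inl e₁) (Sum.inl e₂) := by
    intro v
    by_cases hb : inc e₂ v = false
    · rw [if_pos hb, ind_eq_one (ord_ee hb h)]
    · rw [if_neg hb]; exact Nat.zero_le _
  have hv := vertex_ge (inc := inc) hvv (Sum.inl e₁) (Sum.inl e₂)
    (fun v => if inc e₂ v = false then 1 else 0) hs ho
  rw [sum_ninc hedge e₂] at hv
  rw [ind_eq_one (p1_ee h), ind_eq_one (p2_ee h)]
  omega

lemma pairN_lt {c d : Cand m} (hne : c ≠ d)
    (h : n ≤ pairN (profile m n inc v' v'') c d) :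
    pairN (profile m n inc v' v'') d c < pairN (profile m n inc v' v'') c d := by
  have hc := pairN_compl (inc := inc) hvv h2 hn hne
  omega

lemma pairN_ne {c d : Cand m} (hne : c ≠ d) :
    pairN (profile m n inc v' v'') c d ≠ pairN (profile m n inc v' v'') d c := by
  have hc := pairN_compl (inc := inc) hvv h2 hn hne
  omega

end Bounds

section Final

variable {m n : ℕ} {inc : Fin m → Fin n → Bool} {v' v'' : Fin n}
variable (hvv : v' ≠ v'') (h2 : 2 ∣ n) (hn : 6 ≤ n)
  (hedge : ∀ e : Fin m, ((List.finRange n).filter (fun v => inc e v)).length = 2)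

include hvv h2 hn hedge

lemma copeland_eq (α : ℚ) (c : Cand m) :
    copeland (profile m n inc v' v'') α c =
      ((Finset.univ.filter (fun d => d ≠ c ∧
        pairN (profile m n inc v' v'') c d > pairN (profile m n inc v' v'') d c)).card : ℚ) := by
  unfold copeland
  have hemp : Finset.univ.filter (fun d => d ≠ c ∧
      pairN (profile m n inc v' v'') c d = pairN (profile m n inc v' v'') d c) = ∅ := by
    rw [Finset.eq_empty_iff_forall_notMem]
    intro d hd
    rw [Finset.mem_filter] at hd
    exact pairN_ne hvv h2 hn hedge hd.2.1.symm hd.2.2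
  rw [hemp]
  simp

lemma card_Bset_inr0 :
    (Finset.univ.filter (fun d => d ≠ (Sum.inr 0 : Cand m) ∧
      pairN (profile m n inc v' v'') (Sum.inr 0) d
        > pairN (profile m n inc v' v'') d (Sum.inr 0))).card = m + 4 := by
  rw [Finset.card_filter, Fintype.sum_sum_type, Fin.sum_univ_six]
  rw [Finset.sum_congr rfl (fun e _ => if_pos (⟨by simp,
      pairN_lt hvv h2 hn hedge (by simp <;> decide) (w_p_e hvv h2 hn hedge e)⟩ :
      (Sum.inl e : Cand m) ≠ Sum.inr 0 ∧ _))]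
  rw [if_neg (by simp), if_neg (fun h => absurd h.2 (Nat.lt_asymm
        (pairN_lt hvv h2 hn hedge (by simp <;> decide) (w_a1_p hvv h2 hn hedge)))),
    if_pos ⟨by simp <;> decide, pairN_lt hvv h2 hn hedge (by simp <;> decide) (w_p_a2 hvv h2 hn hedge)⟩,
    if_pos ⟨by simp <;> decide, pairN_lt hvv h2 hn hedge (by simp <;> decide) (w_p_b hvv h2 hn hedge (by decide))⟩,
    if_pos ⟨by simp <;> decide, pairN_lt hvv h2 hn hedge (by simp <;> decide) (w_p_b hvv h2 hn hedge (by decide))⟩,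
    if_pos ⟨by simp <;> decide, pairN_lt hvv h2 hn hedge (by simp <;> decide) (w_p_b hvv h2 hn hedge (by decide))⟩]
  simp [Finset.card_univ]

lemma card_Bset_inr1 :
    (Finset.univ.filter (fun d => d ≠ (Sum.inr 1 : Cand m) ∧
      pairN (profile m n inc v' v'') (Sum.inr 1) d
        > pairN (profile m n inc v' v'') d (Sum.inr 1))).card = m + 2 := by
  rw [Finset.card_filter, Fintype.sum_sum_type, Fin.sum_univ_six]
  rw [Finset.sum_congr rfl (fun e _ => if_pos (⟨by simp,
      pairN_lt hvv h2 hn hedge (by simp <;> decide) (w_a_e hvv h2 hn hedge (Or.inl rfl) e)⟩ :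
      (Sum.inl e : Cand m) ≠ Sum.inr 1 ∧ _))]
  rw [if_pos ⟨by simp <;> decide, pairN_lt hvv h2 hn hedge (by simp <;> decide) (w_a1_p hvv h2 hn hedge)⟩,
    if_neg (by simp),
    if_pos ⟨by simp <;> decide, pairN_lt hvv h2 hn hedge (by simp <;> decide) (w_a1_a2 hvv h2 hn hedge)⟩,
    if_neg (fun h => absurd h.2 (Nat.lt_asymm (pairN_lt hvv h2 hn hedge (by simp <;> decide)
      (w_b_a hvv h2 hn hedge (by decide) (Or.inl rfl))))),
    if_neg (fun h => absurd h.2 (Nat.lt_asymm (pairN_lt hvv h2 hn hedge (by simp <;> decide)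
      (w_b_a hvv h2 hn hedge (by decide) (Or.inl rfl))))),
    if_neg (fun h => absurd h.2 (Nat.lt_asymm (pairN_lt hvv h2 hn hedge (by simp <;> decide)
      (w_b_a hvv h2 hn hedge (by decide) (Or.inl rfl)))))]
  simp [Finset.card_univ]

lemma card_Bset_inr2 :
    (Finset.univ.filter (fun d => d ≠ (Sum.inr 2 : Cand m) ∧
      pairN (profile m n inc v' v'') (Sum.inr 2) d
        > pairN (profile m n inc v' v'') d (Sum.inr 2))).card = m := by
  rw [Finset.card_filter, Fintype.sum_sum_type, Fin.sum_univ_six]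
  rw [Finset.sum_congr rfl (fun e _ => if_pos (⟨by simp,
      pairN_lt hvv h2 hn hedge (by simp <;> decide) (w_a_e hvv h2 hn hedge (Or.inr rfl) e)⟩ :
      (Sum.inl e : Cand m) ≠ Sum.inr 2 ∧ _))]
  rw [if_neg (fun h => absurd h.2 (Nat.lt_asymm (pairN_lt hvv h2 hn hedge (by simp <;> decide)
      (w_p_a2 hvv h2 hn hedge)))),
    if_neg (fun h => absurd h.2 (Nat.lt_asymm (pairN_lt hvv h2 hn hedge (by simp <;> decide)
      (w_a1_a2 hvv h2 hn hedge)))),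
    if_neg (by simp),
    if_neg (fun h => absurd h.2 (Nat.lt_asymm (pairN_lt hvv h2 hn hedge (by simp <;> decide)
      (w_b_a hvv h2 hn hedge (by decide) (Or.inr rfl))))),
    if_neg (fun h => absurd h.2 (Nat.lt_asymm (pairN_lt hvv h2 hn hedge (by simp <;> decide)
      (w_b_a hvv h2 hn hedge (by decide) (Or.inr rfl))))),
    if_neg (fun h => absurd h.2 (Nat.lt_asymm (pairN_lt hvv h2 hn hedge (by simp <;> decide)
      (w_b_a hvv h2 hn hedge (by decide) (Or.inr rfl)))))]
  simp [Finset.card_univ]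

lemma card_Bset_inr3 :
    (Finset.univ.filter (fun d => d ≠ (Sum.inr 3 : Cand m) ∧
      pairN (profile m n inc v' v'') (Sum.inr 3) d
        > pairN (profile m n inc v' v'') d (Sum.inr 3))).card = 4 := by
  rw [Finset.card_filter, Fintype.sum_sum_type, Fin.sum_univ_six]
  rw [Finset.sum_congr rfl (fun e _ => if_neg (fun h => absurd h.2 (Nat.lt_asymm
      (pairN_lt hvv h2 hn hedge (by simp <;> decide) (w_e_b hvv h2 hn hedge e (by decide))))))]
  rw [if_neg (fun h => absurd h.2 (Nat.lt_asymm (pairN_lt hvv h2 hn hedge (by simp <;> decide) (w_p_b hvv h2 hn hedge (by decide))))), if_pos ⟨by simp <;> decide, pairN_lt hvv h2 hn hedge (by simp <;> decide) (w_b_a hvv h2 hn hedge (by decide) (Or.inl rfl))⟩, if_pos ⟨by simp <;> decide, pairN_lt hvv h2 hn hedge (by simp <;> decide) (w_b_a hvv h2 hn hedge (by decide) (Or.inr rfl))⟩, if_neg (by simp), if_pos ⟨by simp <;> decide, pairN_lt hvv h2 hn hedge (by simp <;> decide) (w_b_b hvv h2 hn hedge (by decide) (by decide) (by decide))⟩,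 if_pos ⟨by simp <;> decide, pairN_lt hvv h2 hn hedge (by simp <;> decide) (w_b_b hvv h2 hn hedge (by decide) (by decide) (by decide))⟩]
  simp [Finset.card_univ]

lemma card_Bset_inr4 :
    (Finset.univ.filter (fun d => d ≠ (Sum.inr 4 : Cand m) ∧
      pairN (profile m n inc v' v'') (Sum.inr 4) d
        > pairN (profile m n inc v' v'') d (Sum.inr 4))).card = 3 := by
  rw [Finset.card_filter, Fintype.sum_sum_type, Fin.sum_univ_six]
  rw [Finset.sum_congr rfl (fun e _ => if_neg (fun h => absurd h.2 (Nat.lt_asymm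
      (pairN_lt hvv h2 hn hedge (by simp <;> decide) (w_e_b hvv h2 hn hedge e (by decide))))))]
  rw [if_neg (fun h => absurd h.2 (Nat.lt_asymm (pairN_lt hvv h2 hn hedge (by simp <;> decide) (w_p_b hvv h2 hn hedge (by decide))))), if_pos ⟨by simp <;> decide, pairN_lt hvv h2 hn hedge (by simp <;> decide) (w_b_a hvv h2 hn hedge (by decide) (Or.inl rfl))⟩, if_pos ⟨by simp <;> decide, pairN_lt hvv h2 hn hedge (by simp <;> decide) (w_b_a hvv h2 hn hedge (by decide) (Or.inr rfl))⟩, if_neg (fun h => absurd h.2 (Nat.lt_asymm (pairN_lt hvv h2 hn hedge (by simp <;> decide) (w_b_b hvv h2 hn hedge (by decide) (by decide) (by decide))))), if_neg (by simp), if_pos ⟨by simp <;> decide, pairN_lt hvv h2 hn hedge (by simp <;> decide) (w_b_b hvv h2 hn hedge (by decide) (by decide) (by decide))⟩]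
  simp [Finset.card_univ]

lemma card_Bset_inr5 :
    (Finset.univ.filter (fun d => d ≠ (Sum.inr 5 : Cand m) ∧
      pairN (profile m n inc v' v'') (Sum.inr 5) d
        > pairN (profile m n inc v' v'') d (Sum.inr 5))).card = 2 := by
  rw [Finset.card_filter, Fintype.sum_sum_type, Fin.sum_univ_six]
  rw [Finset.sum_congr rfl (fun e _ => if_neg (fun h => absurd h.2 (Nat.lt_asymm
      (pairN_lt hvv h2 hn hedge (by simp <;> decide) (w_e_b hvv h2 hn hedge e (by decide))))))]
  rw [if_neg (fun h => absurd h.2 (Nat.lt_asymm (pairN_lt hvv h2 hn hedge (by simp <;> decide) (w_p_b hvv h2 hn hedge (by decide))))), if_pos ⟨by simp <;> decide, pairN_lt hvv h2 hn hedge (by simp <;> decide) (w_b_a hvv h2 hn hedge (by decide) (Or.inl rfl))⟩, if_pos ⟨by simp <;> decide, pairN_lt hvv h2 hn hedge (by simp <;> decide) (w_b_a hvv h2 hn hedge (by decide) (Or.inr rfl))⟩, if_neg (fun h => absurd h.2 (Nat.lt_asymm (pairN_lt hvv h2 hn hedge (by simp <;> decide) (w_b_b hvv h2 hn hedge (by decide)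 (by decide) (by decide))))), if_neg (fun h => absurd h.2 (Nat.lt_asymm (pairN_lt hvv h2 hn hedge (by simp <;> decide) (w_b_b hvv h2 hn hedge (by decide) (by decide) (by decide))))), if_neg (by simp)]
  simp [Finset.card_univ]

lemma card_Bset_inl (i : Fin m) :
    (Finset.univ.filter (fun d => d ≠ (Sum.inl i : Cand m) ∧
      pairN (profile m n inc v' v'') (Sum.inl i) d
        > pairN (profile m n inc v' v'') d (Sum.inl i))).card = (m - 1 - i) + 3 := by
  rw [Finset.card_filter, Fintype.sum_sum_type, Fin.sum_univ_six]
  have hterm : ∀ j : Fin m, (if ((Sum.inl j : Cand m) ≠ Sum.inl i ∧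
      pairN (profile m n inc v' v'') (Sum.inl i) (Sum.inl j)
        > pairN (profile m n inc v' v'') (Sum.inl j) (Sum.inl i)) then 1 else 0)
      = (if i < j then 1 else 0) := by
    intro j
    rcases lt_trichotomy i j with h | h | h
    · rw [if_pos ⟨by simp [(Fin.ne_of_lt h).symm],
        pairN_lt hvv h2 hn hedge (by simp [Fin.ne_of_lt h]) (w_e_e hvv h2 hn hedge h)⟩,
        if_pos h]
    · rw [if_neg (by simp [h]), if_neg (by simp [h])]
    · rw [if_neg (fun hc => absurd hc.2 (Nat.lt_asymm
        (pairN_lt hvv h2 hn hedge (by simp [Fin.ne_of_lt h]) (w_e_e hvv h2 hn hedge h)))),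
        if_neg (by omega)]
  rw [Finset.sum_congr rfl (fun j _ => hterm j)]
  have hIoi : ∑ j : Fin m, (if i < j then 1 else 0) = (m - 1 - i) := by
    rw [← Finset.card_filter]
    have : Finset.univ.filter (fun j : Fin m => i < j) = Finset.Ioi i := by
      ext x; simp
    rw [this, Fin.card_Ioi]
  rw [hIoi]
  rw [if_neg (fun h => absurd h.2 (Nat.lt_asymm (pairN_lt hvv h2 hn hedge (by simp <;> decide)
      (w_p_e hvv h2 hn hedge i)))),
    if_neg (fun h => absurd h.2 (Nat.lt_asymm (pairN_lt hvv h2 hn hedge (by simp <;> decide)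
      (w_a_e hvv h2 hn hedge (Or.inl rfl) i)))),
    if_neg (fun h => absurd h.2 (Nat.lt_asymm (pairN_lt hvv h2 hn hedge (by simp <;> decide)
      (w_a_e hvv h2 hn hedge (Or.inr rfl) i)))),
    if_pos ⟨by simp <;> decide, pairN_lt hvv h2 hn hedge (by simp <;> decide) (w_e_b hvv h2 hn hedge i (by decide))⟩,
    if_pos ⟨by simp <;> decide, pairN_lt hvv h2 hn hedge (by simp <;> decide) (w_e_b hvv h2 hn hedge i (by decide))⟩,
    if_pos ⟨by simp <;> decide, pairN_lt hvv h2 hn hedge (by simp <;> decide) (w_e_b hvv h2 hn hedge i (by decide))⟩]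

end Final

/-- In the initial profile of the Copeland reduction, the Copeland^α scores are
`s(p) = |E| + 4`, `s(a₁) = |E| + 2`, `s(a₂) = |E|`, `s(b_i) = 5 − i`, and
`s(e_i) = |E| − i + 3` (with 1-based index `i`); hence `p` is the unique
Copeland^α winner. -/
theorem stmt_14 (m n : ℕ) (hEven : Even n) (hn : 6 ≤ n)
    (inc : Fin m → Fin n → Bool) (v' v'' : Fin n) (hvv : v' ≠ v'')
    (hdeg' : ((List.finRange m).filter (fun e => inc e v')).length = 1)
    (hdeg'' : ((List.finRange m).filter (fun e => inc e v'')).length = 1)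
    (hedge : ∀ e : Fin m, ((List.finRange n).filter (fun v => inc e v)).length = 2)
    (α : ℚ) (hα0 : 0 ≤ α) (hα1 : α ≤ 1) :
    copeland (profile m n inc v' v'') α (pC m) = (m : ℚ) + 4 ∧
    copeland (profile m n inc v' v'') α (a1 m) = (m : ℚ) + 2 ∧
    copeland (profile m n inc v' v'') α (a2 m) = (m : ℚ) ∧
    copeland (profile m n inc v' v'') α (b1 m) = 4 ∧
    copeland (profile m n inc v' v'') α (b2 m) = 3 ∧
    copeland (profile m n inc v' v'') α (b3 m) = 2 ∧
    (∀ i : Fin m,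
      copeland (profile m n inc v' v'') α (Sum.inl i) = (m : ℚ) - ((i : ℕ) + 1) + 3) ∧
    (∀ c : Cand m, c ≠ pC m →
      copeland (profile m n inc v' v'') α c <
        copeland (profile m n inc v' v'') α (pC m)) := by
  have h2 : 2 ∣ n := hEven.two_dvd
  have hm : 1 ≤ m := by
    by_contra hm0
    push_neg at hm0
    have hm' : m = 0 := by omega
    subst hm'
    simp [List.finRange] at hdeg'
  have hp : copeland (profile m n inc v' v'') α (pC m) = (m : ℚ) + 4 := by
    show copeland (profile m n inc v' v'') α (Sum.inr 0) = (m : ℚ) + 4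
    rw [copeland_eq hvv h2 hn hedge α (Sum.inr 0), card_Bset_inr0 hvv h2 hn hedge]
    push_cast; ring
  have ha1 : copeland (profile m n inc v' v'') α (a1 m) = (m : ℚ) + 2 := by
    show copeland (profile m n inc v' v'') α (Sum.inr 1) = (m : ℚ) + 2
    rw [copeland_eq hvv h2 hn hedge α (Sum.inr 1), card_Bset_inr1 hvv h2 hn hedge]
    push_cast; ring
  have ha2 : copeland (profile m n inc v' v'') α (a2 m) = (m : ℚ) := by
    show copeland (profile m n inc v' v'') α (Sum.inr 2) = (m : ℚ)
    rw [copeland_eq hvv h2 hn hedge α (Sum.inr 2), card_Bset_inr2 hvv h2 hn hedge]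
  have hb1 : copeland (profile m n inc v' v'') α (b1 m) = 4 := by
    show copeland (profile m n inc v' v'') α (Sum.inr 3) = 4
    rw [copeland_eq hvv h2 hn hedge α (Sum.inr 3), card_Bset_inr3 hvv h2 hn hedge]
    norm_num
  have hb2 : copeland (profile m n inc v' v'') α (b2 m) = 3 := by
    show copeland (profile m n inc v' v'') α (Sum.inr 4) = 3
    rw [copeland_eq hvv h2 hn hedge α (Sum.inr 4), card_Bset_inr4 hvv h2 hn hedge]
    norm_num
  have hb3 : copeland (profile m n inc v' v'') α (b3 m) = 2 := by
    show copeland (profile m n inc v' v'') α (Sum.inr 5) = 2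
    rw [copeland_eq hvv h2 hn hedge α (Sum.inr 5), card_Bset_inr5 hvv h2 hn hedge]
    norm_num
  have hE : ∀ i : Fin m,
      copeland (profile m n inc v' v'') α (Sum.inl i) = (m : ℚ) - ((i : ℕ) + 1) + 3 := by
    intro i
    rw [copeland_eq hvv h2 hn hedge α (Sum.inl i), card_Bset_inl hvv h2 hn hedge i]
    have hi : (i : ℕ) < m := i.isLt
    have hss : m - 1 - (i : ℕ) = m - (1 + (i : ℕ)) := by omega
    rw [hss, Nat.cast_add, Nat.cast_sub (by omega)]
    push_cast; ring
  refine ⟨hp, ha1, ha2, hb1, hb2, hb3, hE, ?_⟩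
  intro c hc
  have hm' : (1 : ℚ) ≤ (m : ℚ) := by exact_mod_cast hm
  rcases c with i | j
  · rw [hE i, hp]
    have : (0 : ℚ) ≤ ((i : ℕ) : ℚ) := Nat.cast_nonneg _
    linarith
  · have hj : j = 0 ∨ j = 1 ∨ j = 2 ∨ j = 3 ∨ j = 4 ∨ j = 5 := by fin_cases j <;> decide
    rcases hj with rfl | rfl | rfl | rfl | rfl | rfl
    · exact absurd rfl hc
    · rw [show (Sum.inr (1 : Fin 6) : Cand m) = a1 m from rfl, ha1, hp]; linarith
    · rw [show (Sum.inr (2 : Fin 6) : Cand m) = a2 m from rfl, ha2, hp]; linarith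
    · rw [show (Sum.inr (3 : Fin 6) : Cand m) = b1 m from rfl, hb1, hp]; linarith
    · rw [show (Sum.inr (4 : Fin 6) : Cand m) = b2 m from rfl, hb2, hp]; linarith
    · rw [show (Sum.inr (5 : Fin 6) : Cand m) = b3 m from rfl, hb3, hp]; linarith

end Stmt14
end

section
/- In the Maximin reduction election from an X3C instance, if S ⊆ 𝒮 is an exact 3-set cover and all voters of the parties corresponding to S switch to the party P (with preference z ≻ X ≻ p ≻ α ≻ β), then in the resulting election N(z, x_i) ≥ n + 1 for every x_i ∈ X, and hence the Maximin score of z is at least n + 1 ≥ s(p), so p is no longer the unique Maximin winner. -/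
namespace Stmt17

/-- Candidates: one per element of `X` (`Sum.inl`) plus `p, z, α, β`. -/
abbrev Cand (m : ℕ) := Fin m ⊕ Fin 4

def pC (m : ℕ) : Cand m := Sum.inr 0
def zC (m : ℕ) : Cand m := Sum.inr 1
/-- The candidate `α` of the construction. -/
def aC (m : ℕ) : Cand m := Sum.inr 2
/-- The candidate `β` of the construction. -/
def bC (m : ℕ) : Cand m := Sum.inr 3

def allX (m : ℕ) : List (Cand m) := (List.finRange m).map Sum.inl

/-- `x_i ≻ x_j ≻ x_k ≻ z ≻ p ≻ X \ S_t ≻ β ≻ α`. -/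
def setPref (m : ℕ) (St : Finset (Fin m)) : List (Cand m) :=
  (((List.finRange m).filter (fun x => decide (x ∈ St))).map Sum.inl)
    ++ [zC m, pC m]
    ++ (((List.finRange m).filter (fun x => decide (x ∉ St))).map Sum.inl)
    ++ [bC m, aC m]

/-- `β ≻ α ≻ p ≻ X ≻ z`. -/
def halfPref1 (m : ℕ) : List (Cand m) := [bC m, aC m, pC m] ++ allX m ++ [zC m]

/-- `α ≻ p ≻ X ≻ z ≻ β`. -/
def halfPref2 (m : ℕ) : List (Cand m) := [aC m, pC m] ++ allX m ++ [zC m, bC m]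

def blockIn (m : ℕ) (j : ℕ) : List (Cand m) :=
  ((List.finRange m).filter (fun x : Fin m => decide (x.val / 3 = j))).map Sum.inl

def blockOut (m : ℕ) (j : ℕ) : List (Cand m) :=
  ((List.finRange m).filter (fun x : Fin m => decide (x.val / 3 ≠ j))).map Sum.inl

/-- `β ≻ α ≻ p ≻ X \ B_j ≻ z ≻ B_j`. -/
def blockPref1 (m : ℕ) (j : ℕ) : List (Cand m) :=
  [bC m, aC m, pC m] ++ blockOut m j ++ [zC m] ++ blockIn m j

/-- `α ≻ p ≻ X \ B_j ≻ z ≻ B_j ≻ β`. -/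
def blockPref2 (m : ℕ) (j : ℕ) : List (Cand m) :=
  [aC m, pC m] ++ blockOut m j ++ [zC m] ++ blockIn m j ++ [bC m]

/-- The party `P`: `z ≻ X ≻ p ≻ α ≻ β`. -/
def partyP (m : ℕ) : List (Cand m) := [zC m] ++ allX m ++ [pC m, aC m, bC m]

/-- The profile after the voters of the set-parties in `cover` switch to the
party `P` (i.e. they cast `P`'s preference instead of their own). -/
def profileSwitched (m n : ℕ) (S : Fin n → Finset (Fin m)) (cover : Finset (Fin n)) :
    List (ℕ × List (Cand m)) :=
  ((List.finRange n).map
      (fun t => (1, if t ∈ cover then partyP m else setPref m (S t))))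
    ++ [((n - m / 3) / 2, halfPref1 m), ((n - m / 3) / 2, halfPref2 m)]
    ++ ((List.range (m / 3)).map (fun j => (1, blockPref1 m j)))
    ++ ((List.range (m / 3)).map (fun j => (1, blockPref2 m j)))
    ++ [(1, partyP m)]

/-- `N(c,d)`: the (weighted) number of voters preferring `c` to `d`. -/
def pairN {C : Type*} [DecidableEq C] (prof : List (ℕ × List C)) (c d : C) : ℕ :=
  (prof.map (fun wl => if wl.2.idxOf c < wl.2.idxOf d then wl.1 else 0)).sum

/-- The Maximin score: the minimum over `d ≠ c` of `N(c,d)` (in `ℕ∞`). -/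
noncomputable def maximin {C : Type*} [Fintype C] [DecidableEq C]
    (prof : List (ℕ × List C)) (c : C) : ℕ∞ :=
  (Finset.univ.erase c).inf (fun d => (pairN prof c d : ℕ∞))



/-! ### Auxiliary lemmas -/

/-- `List.indexOf` with the `BEq` instance coming from `DecidableEq`,
as used inside `pairN`. -/
abbrev idx {m : ℕ} (c : Cand m) (l : List (Cand m)) : ℕ :=
  @List.idxOf (Cand m) instBEqOfDecidableEq c l

lemma split_lt {α : Type*} [DecidableEq α] {c d : α} {l₁ l₂ : List α}
    (hc : c ∈ l₁) (hd : d ∉ l₁) :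
    (l₁ ++ l₂).idxOf c < (l₁ ++ l₂).idxOf d := by
  rw [List.idxOf_append_of_mem hc, List.idxOf_append_of_notMem hd]
  exact lt_of_lt_of_le (List.idxOf_lt_length_iff.mpr hc) (Nat.le_add_right _ _)

lemma partyP_lt {m : ℕ} {d : Cand m} (hd : d ≠ zC m) :
    idx (zC m) (partyP m) < idx d (partyP m) := by
  rw [show partyP m = [zC m] ++ (allX m ++ [pC m, aC m, bC m]) from by simp [partyP]]
  apply split_lt <;> simp [hd]

lemma setPref_z_lt {m : ℕ} {St : Finset (Fin m)} {d : Cand m}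
    (h1 : d ∉ (((List.finRange m).filter (fun x => decide (x ∈ St))).map
      (Sum.inl : Fin m → Cand m)))
    (h2 : d ≠ zC m) :
    idx (zC m) (setPref m St) < idx d (setPref m St) := by
  rw [show setPref m St =
      ((((List.finRange m).filter (fun x => decide (x ∈ St))).map Sum.inl) ++ [zC m])
      ++ ([pC m] ++ ((((List.finRange m).filter (fun x => decide (x ∉ St))).map Sum.inl)
        ++ [bC m, aC m])) from by simp [setPref]]
  apply split_lt
  · simp
  simp only [List.mem_append, List.mem_singleton]
  rintro (h | h)
  · exact h1 h
  · exact h2 h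

lemma setPref_p_lt_a {m : ℕ} {St : Finset (Fin m)} :
    idx (pC m) (setPref m St) < idx (aC m) (setPref m St) := by
  rw [show setPref m St =
      ((((List.finRange m).filter (fun x => decide (x ∈ St))).map Sum.inl) ++ [zC m, pC m])
      ++ (((((List.finRange m).filter (fun x => decide (x ∉ St))).map Sum.inl))
        ++ [bC m, aC m]) from by simp [setPref]]
  apply split_lt <;> simp [aC, pC, zC]

lemma partyP_p_lt_a {m : ℕ} :
    idx (pC m) (partyP m) < idx (aC m) (partyP m) := by
  rw [show partyP m = ([zC m] ++ allX m ++ [pC m]) ++ [aC m, bC m] from by simp [partyP]]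
  apply split_lt <;> simp [allX, aC, pC, zC]

lemma halfPref1_a_lt_p {m : ℕ} : idx (aC m) (halfPref1 m) < idx (pC m) (halfPref1 m) := by
  rw [show halfPref1 m = [bC m, aC m] ++ ([pC m] ++ (allX m ++ [zC m])) from by simp [halfPref1]]
  apply split_lt <;> simp [aC, bC, pC]

lemma halfPref2_a_lt_p {m : ℕ} : idx (aC m) (halfPref2 m) < idx (pC m) (halfPref2 m) := by
  rw [show halfPref2 m = [aC m] ++ ([pC m] ++ (allX m ++ [zC m, bC m])) from by simp [halfPref2]]
  apply split_lt <;> simp [aC, pC]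

lemma blockPref1_a_lt_p {m j : ℕ} : idx (aC m) (blockPref1 m j) < idx (pC m) (blockPref1 m j) := by
  rw [show blockPref1 m j = [bC m, aC m] ++ ([pC m] ++ (blockOut m j ++ ([zC m] ++ blockIn m j)))
      from by simp [blockPref1]]
  apply split_lt <;> simp [aC, bC, pC]

lemma blockPref2_a_lt_p {m j : ℕ} : idx (aC m) (blockPref2 m j) < idx (pC m) (blockPref2 m j) := by
  rw [show blockPref2 m j =
      [aC m] ++ ([pC m] ++ (blockOut m j ++ ([zC m] ++ (blockIn m j ++ [bC m]))))
      from by simp [blockPref2]]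
  apply split_lt <;> simp [aC, pC]

lemma blockPref1_z_lt_inl {m j : ℕ} {i : Fin m} (hij : (i : ℕ) / 3 = j) :
    idx (zC m) (blockPref1 m j) < idx (Sum.inl i) (blockPref1 m j) := by
  rw [show blockPref1 m j = ([bC m, aC m, pC m] ++ blockOut m j ++ [zC m]) ++ blockIn m j
      from rfl]
  apply split_lt <;> simp [blockOut, hij, zC, aC, bC, pC]

lemma blockPref2_z_lt_inl {m j : ℕ} {i : Fin m} (hij : (i : ℕ) / 3 = j) :
    idx (zC m) (blockPref2 m j) < idx (Sum.inl i) (blockPref2 m j) := by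
  rw [show blockPref2 m j = ([aC m, pC m] ++ blockOut m j ++ [zC m]) ++ (blockIn m j ++ [bC m])
      from by simp [blockPref2]]
  apply split_lt <;> simp [blockOut, hij, zC, aC, pC]

lemma pairN_profile (m n : ℕ) (S : Fin n → Finset (Fin m)) (cover : Finset (Fin n))
    (c d : Cand m) :
    pairN (profileSwitched m n S cover) c d =
      (∑ t : Fin n,
        if idx c (if t ∈ cover then partyP m else setPref m (S t)) <
            idx d (if t ∈ cover then partyP m else setPref m (S t)) then 1 else 0)
      + (if idx c (halfPref1 m) < idx d (halfPref1 m) then (n - m / 3) / 2 else 0)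
      + (if idx c (halfPref2 m) < idx d (halfPref2 m) then (n - m / 3) / 2 else 0)
      + ((List.range (m / 3)).map
          (fun j => if idx c (blockPref1 m j) < idx d (blockPref1 m j) then 1 else 0)).sum
      + ((List.range (m / 3)).map
          (fun j => if idx c (blockPref2 m j) < idx d (blockPref2 m j) then 1 else 0)).sum
      + (if idx c (partyP m) < idx d (partyP m) then 1 else 0) := by
  have hfin : ∀ g : Fin n → ℕ, ((List.finRange n).map g).sum = ∑ t : Fin n, g t := fun _ => rfl
  simp only [profileSwitched, pairN, List.map_append, List.sum_append, List.map_map,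
    List.map_cons, List.map_nil, List.sum_cons, List.sum_nil, Function.comp_def]
  rw [hfin]
  simp only [idx]
  omega

/-- If `cover` is an exact 3-set cover and all voters of the corresponding
set-parties switch to the party `P` (with preference `z ≻ X ≻ p ≻ α ≻ β`),
then in the resulting election `N(z, x_i) ≥ n + 1` for every `x_i`, the Maximin
score of `z` is at least `n + 1 ≥ s(p)`, and hence `p` is no longer the unique
Maximin winner. -/
theorem stmt_17 (m n : ℕ) (S : Fin n → Finset (Fin m))
    (hm3 : 3 ≤ m) (hdvd : 3 ∣ m) (hmn : m / 3 < n) (hEven : Even (n - m / 3))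
    (hsize : ∀ t : Fin n, (S t).card = 3)
    (hocc : ∀ x : Fin m, (Finset.univ.filter (fun t : Fin n => x ∈ S t)).card = 3)
    (cover : Finset (Fin n))
    (hcover : ∀ x : Fin m, (cover.filter (fun t => x ∈ S t)).card = 1) :
    (∀ i : Fin m,
      n + 1 ≤ pairN (profileSwitched m n S cover) (zC m) (Sum.inl i)) ∧
    ((n + 1 : ℕ) : ℕ∞) ≤ maximin (profileSwitched m n S cover) (zC m) ∧
    maximin (profileSwitched m n S cover) (pC m) ≤ ((n + 1 : ℕ) : ℕ∞) ∧
    ¬ (∀ c : Cand m, c ≠ pC m →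
        maximin (profileSwitched m n S cover) c <
          maximin (profileSwitched m n S cover) (pC m)) := by
  classical
  have hm1 : 1 ≤ m / 3 := (Nat.one_le_div_iff (by norm_num)).mpr hm3
  have hn2 : 2 ≤ n := by omega
  -- Part 1: N(z, x_i) ≥ n + 1
  have part1 : ∀ i : Fin m,
      n + 1 ≤ pairN (profileSwitched m n S cover) (zC m) (Sum.inl i) := by
    intro i
    rw [pairN_profile]
    have hpp : (if idx (zC m) (partyP m) < idx (Sum.inl i) (partyP m) then 1 else 0) = 1 :=
      if_pos (partyP_lt (by simp [zC]))
    have hb1 : 1 ≤ ((List.range (m / 3)).map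
        (fun j => if idx (zC m) (blockPref1 m j) < idx (Sum.inl i) (blockPref1 m j)
          then 1 else 0)).sum := by
      apply List.le_sum_of_mem
      exact List.mem_map.mpr ⟨(i : ℕ) / 3,
        List.mem_range.mpr (Nat.div_lt_div_of_lt_of_dvd hdvd i.isLt),
        by rw [if_pos (blockPref1_z_lt_inl rfl)]⟩
    have hb2 : 1 ≤ ((List.range (m / 3)).map
        (fun j => if idx (zC m) (blockPref2 m j) < idx (Sum.inl i) (blockPref2 m j)
          then 1 else 0)).sum := by
      apply List.le_sum_of_mem
      exact List.mem_map.mpr ⟨(i : ℕ) / 3,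
        List.mem_range.mpr (Nat.div_lt_div_of_lt_of_dvd hdvd i.isLt),
        by rw [if_pos (blockPref2_z_lt_inl rfl)]⟩
    have hcard2 : (Finset.univ.filter fun t : Fin n => i ∈ S t ∧ t ∉ cover).card = 2 := by
      have h3 : (Finset.univ.filter fun t : Fin n => i ∈ S t).card = 3 := hocc i
      have h1' : ((Finset.univ.filter fun t : Fin n => i ∈ S t).filter
          fun t => t ∈ cover).card = 1 := by
        rw [← hcover i]
        congr 1
        ext t
        simp only [Finset.mem_filter, Finset.mem_univ, true_and]
        tauto
      have hsplit := Finset.card_filter_add_card_filter_not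
        (s := Finset.univ.filter fun t : Fin n => i ∈ S t) (p := fun t => t ∈ cover)
      rw [Finset.filter_filter, Finset.filter_filter] at hsplit
      rw [Finset.filter_filter] at h1'
      omega
    have hcardn : (Finset.univ.filter fun t : Fin n => ¬(i ∈ S t ∧ t ∉ cover)).card = n - 2 := by
      have hsplit := Finset.card_filter_add_card_filter_not
        (s := (Finset.univ : Finset (Fin n))) (p := fun t => i ∈ S t ∧ t ∉ cover)
      rw [Finset.card_univ, Fintype.card_fin] at hsplit
      omega
    have hset : n - 2 ≤ ∑ t : Fin n,
        if idx (zC m) (if t ∈ cover then partyP m else setPref m (S t)) <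
            idx (Sum.inl i) (if t ∈ cover then partyP m else setPref m (S t))
          then 1 else 0 := by
      calc n - 2 = ∑ t : Fin n, if ¬(i ∈ S t ∧ t ∉ cover) then 1 else 0 := by
            rw [← hcardn]; simp [Finset.sum_boole]
        _ ≤ _ := by
            apply Finset.sum_le_sum
            intro t _
            by_cases hq : ¬(i ∈ S t ∧ t ∉ cover)
            · rw [if_pos hq]
              by_cases ht : t ∈ cover
              · rw [if_pos ht, if_pos (partyP_lt (by simp [zC]))]
              · have hiS : i ∉ S t := by tauto
                rw [if_neg ht, if_pos (setPref_z_lt (by simp [hiS]) (by simp [zC]))]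
            · simp [hq]
    omega
  -- Part 2: maximin of z is at least n + 1
  have hge : ∀ d : Cand m, (∀ x : Fin m, d ≠ Sum.inl x) → d ≠ zC m →
      n + 1 ≤ pairN (profileSwitched m n S cover) (zC m) d := by
    intro d hdx hdz
    rw [pairN_profile]
    have hpp : (if idx (zC m) (partyP m) < idx d (partyP m) then 1 else 0) = 1 :=
      if_pos (partyP_lt hdz)
    have hset : n ≤ ∑ t : Fin n,
        if idx (zC m) (if t ∈ cover then partyP m else setPref m (S t)) <
            idx d (if t ∈ cover then partyP m else setPref m (S t)) then 1 else 0 := by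
      calc n = ∑ _t : Fin n, 1 := by simp
        _ ≤ _ := by
            apply Finset.sum_le_sum
            intro t _
            by_cases ht : t ∈ cover
            · rw [if_pos ht, if_pos (partyP_lt hdz)]
            · rw [if_neg ht, if_pos (setPref_z_lt ?_ hdz)]
              simp only [List.mem_map]
              rintro ⟨x, -, rfl⟩
              exact hdx x rfl
    omega
  have part2 : ((n + 1 : ℕ) : ℕ∞) ≤ maximin (profileSwitched m n S cover) (zC m) := by
    apply Finset.le_inf
    intro d hd
    have hdz : d ≠ zC m := Finset.ne_of_mem_erase hd
    have : n + 1 ≤ pairN (profileSwitched m n S cover) (zC m) d := by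
      rcases d with i | k
      · exact part1 i
      · exact hge _ (fun x => by simp) hdz
    exact_mod_cast this
  -- Part 3: maximin of p is at most n + 1
  have hpa : pairN (profileSwitched m n S cover) (pC m) (aC m) ≤ n + 1 := by
    rw [pairN_profile]
    have hH1 : (if idx (pC m) (halfPref1 m) < idx (aC m) (halfPref1 m)
        then (n - m / 3) / 2 else 0) = 0 := if_neg (Nat.lt_asymm halfPref1_a_lt_p)
    have hH2 : (if idx (pC m) (halfPref2 m) < idx (aC m) (halfPref2 m)
        then (n - m / 3) / 2 else 0) = 0 := if_neg (Nat.lt_asymm halfPref2_a_lt_p)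
    have hB1 : ((List.range (m / 3)).map
        (fun j => if idx (pC m) (blockPref1 m j) < idx (aC m) (blockPref1 m j)
          then 1 else 0)).sum = 0 := by
      apply List.sum_eq_zero
      intro x hx
      obtain ⟨j, -, rfl⟩ := List.mem_map.mp hx
      exact if_neg (Nat.lt_asymm blockPref1_a_lt_p)
    have hB2 : ((List.range (m / 3)).map
        (fun j => if idx (pC m) (blockPref2 m j) < idx (aC m) (blockPref2 m j)
          then 1 else 0)).sum = 0 := by
      apply List.sum_eq_zero
      intro x hx
      obtain ⟨j, -, rfl⟩ := List.mem_map.mp hx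
      exact if_neg (Nat.lt_asymm blockPref2_a_lt_p)
    have hset : (∑ t : Fin n,
        if idx (pC m) (if t ∈ cover then partyP m else setPref m (S t)) <
            idx (aC m) (if t ∈ cover then partyP m else setPref m (S t))
          then 1 else 0) ≤ n := by
      calc (∑ t : Fin n,
          if idx (pC m) (if t ∈ cover then partyP m else setPref m (S t)) <
              idx (aC m) (if t ∈ cover then partyP m else setPref m (S t))
            then 1 else 0) ≤ ∑ _t : Fin n, 1 := by
            apply Finset.sum_le_sum
            intro t _
            have hgen : ∀ (c : Prop) (_ : Decidable c), (if c then (1:ℕ) else 0) ≤ 1 := by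
              intro c hc; split <;> omega
            exact hgen _ _
        _ = n := by simp
    have hpp : (if idx (pC m) (partyP m) < idx (aC m) (partyP m) then 1 else 0) ≤ 1 := by
      have hgen : ∀ (c : Prop) (_ : Decidable c), (if c then (1:ℕ) else 0) ≤ 1 := by
        intro c hc; split <;> omega
      exact hgen _ _
    omega
  have part3 : maximin (profileSwitched m n S cover) (pC m) ≤ ((n + 1 : ℕ) : ℕ∞) := by
    have hmem : aC m ∈ Finset.univ.erase (pC m) :=
      Finset.mem_erase.mpr ⟨by simp [aC, pC], Finset.mem_univ _⟩
    have h4 := Finset.inf_le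
      (f := fun d => ((pairN (profileSwitched m n S cover) (pC m) d : ℕ∞))) hmem
    refine le_trans h4 ?_
    exact_mod_cast hpa
  refine ⟨part1, part2, part3, ?_⟩
  intro h
  have hzp : zC m ≠ pC m := by simp [zC, pC]
  have h1 := h (zC m) hzp
  exact absurd (lt_of_le_of_lt part2 (lt_of_lt_of_le h1 part3)) (lt_irrefl _)


end Stmt17
end

section
/- In the Maximin (Independent Set) reduction election, if S is an independent set of G of size k and the k voters of the parties P_v for v ∈ S switch to party P, then for every edge-candidate e_i at most one switched voter originally preferred p to e_i, hence N(p, e_i) ≥ n+1 after the switch; moreover every e_i beats p by at most n after the switch, so the Maximin score of p remains n+1 and every e_i has Maximin score at most n, and p remains the unique Maximin winner. -/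
namespace Stmt19

attribute [-instance] Sum.instBEq




section IndexOf
variable {α : Type*} [BEq α] [LawfulBEq α]

theorem idx_cons_self (a : α) (l : List α) : List.idxOf a (a :: l) = 0 := by
  simp [List.idxOf, List.findIdx_cons]

theorem idx_cons_ne {a b : α} (h : b ≠ a) (l : List α) :
    List.idxOf a (b :: l) = (List.idxOf a l) + 1 := by
  have : (b == a) = false := by simpa using h
  simp [List.idxOf, List.findIdx_cons, this]

theorem idx_lt_length {a : α} {l : List α} (h : a ∈ l) : l.idxOf a < l.length := by
  induction l with
  | nil => simp at h
  | cons b t ih =>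
    by_cases hb : b = a
    · subst hb; simp [idx_cons_self]
    · rcases List.mem_cons.1 h with h' | h'
      · exact absurd h'.symm hb
      · simp [idx_cons_ne hb]; exact ih h'

theorem idx_append_not_mem {l₁ l₂ : List α} {a : α} (h : a ∉ l₁) :
    (l₁ ++ l₂).idxOf a = l₁.length + l₂.idxOf a := by
  induction l₁ with
  | nil => simp
  | cons b t ih =>
    have hb : b ≠ a := fun e => h (e ▸ List.mem_cons_self)
    simp only [List.cons_append, idx_cons_ne hb, ih (fun hm => h (List.mem_cons_of_mem _ hm)),
      List.length_cons]
    omega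

theorem idx_append_mem {l₁ l₂ : List α} {a : α} (h : a ∈ l₁) :
    (l₁ ++ l₂).idxOf a = l₁.idxOf a := by
  induction l₁ with
  | nil => simp at h
  | cons b t ih =>
    by_cases hb : b = a
    · subst hb; simp [idx_cons_self]
    · rcases List.mem_cons.1 h with h' | h'
      · exact absurd h'.symm hb
      · simp [idx_cons_ne hb, ih h']

theorem before_of_split {l₁ l₂ : List α} {x y : α} (hx : x ∈ l₁) (hy : y ∉ l₁) :
    List.idxOf x (l₁ ++ l₂) < List.idxOf y (l₁ ++ l₂) := by
  rw [idx_append_mem hx, idx_append_not_mem hy]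
  exact lt_of_lt_of_le (idx_lt_length hx) (Nat.le_add_right _ _)

theorem cons_before {x y : α} (h : x ≠ y) (l : List α) :
    List.idxOf x (x :: l) < List.idxOf y (x :: l) := by
  rw [idx_cons_self, idx_cons_ne h]
  exact Nat.succ_pos _

end IndexOf


/-- Candidates: one per edge (`Sum.inl`) plus `p, a, b`. -/
abbrev Cand (m : ℕ) := Fin m ⊕ Fin 3

def pC (m : ℕ) : Cand m := Sum.inr 0
def aC (m : ℕ) : Cand m := Sum.inr 1
def bC (m : ℕ) : Cand m := Sum.inr 2

def edgesInc (m n : ℕ) (inc : Fin m → Fin n → Bool) (v : Fin n) : List (Cand m) :=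
  ((List.finRange m).filter (fun e => inc e v)).map Sum.inl

def edgesNot (m n : ℕ) (inc : Fin m → Fin n → Bool) (v : Fin n) : List (Cand m) :=
  ((List.finRange m).filter (fun e => !(inc e v))).map Sum.inl

def allEdges (m : ℕ) : List (Cand m) := (List.finRange m).map Sum.inl

/-- The vertex party `P_v`: `a ≻ (E \ E(v)) ≻ p ≻ E(v) ≻ b`. -/
def vertexPref (m n : ℕ) (inc : Fin m → Fin n → Bool) (v : Fin n) : List (Cand m) :=
  [aC m] ++ edgesNot m n inc v ++ [pC m] ++ edgesInc m n inc v ++ [bC m]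

/-- The party `P'` (n voters): `b ≻ p ≻ reverse(E) ≻ a`. -/
def partyP' (m : ℕ) : List (Cand m) := [bC m, pC m] ++ (allEdges m).reverse ++ [aC m]

/-- The party `P` (one voter): `E ≻ p ≻ b ≻ a`. -/
def partyP (m : ℕ) : List (Cand m) := allEdges m ++ [pC m, bC m, aC m]

/-- The profile after the voters of the vertex parties `P_v`, `v ∈ S`, switch
to party `P` (casting `P`'s preference `E ≻ p ≻ b ≻ a`). -/
def profileSwitched (m n : ℕ) (inc : Fin m → Fin n → Bool) (S : Finset (Fin n)) :
    List (ℕ × List (Cand m)) :=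
  ((List.finRange n).map
      (fun v => (1, if v ∈ S then partyP m else vertexPref m n inc v)))
    ++ [(n, partyP' m), (1, partyP m)]

/-- `N(c,d)`: the (weighted) number of voters preferring `c` to `d`. -/
def pairN {C : Type*} [DecidableEq C] (prof : List (ℕ × List C)) (c d : C) : ℕ :=
  (prof.map (fun wl => if wl.2.idxOf c < wl.2.idxOf d then wl.1 else 0)).sum

/-- The Maximin score: the minimum over `d ≠ c` of `N(c,d)` (in `ℕ∞`). -/
noncomputable def maximin {C : Type*} [Fintype C] [DecidableEq C]
    (prof : List (ℕ × List C)) (c : C) : ℕ∞ :=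
  (Finset.univ.erase c).inf (fun d => (pairN prof c d : ℕ∞))

section Orderings
variable {m n : ℕ} {inc : Fin m → Fin n → Bool} {v : Fin n} {e : Fin m}

lemma mem_allEdges : (Sum.inl e : Cand m) ∈ allEdges m := by simp [allEdges]

lemma vp_e_lt_p (h : inc e v = false) :
    (vertexPref m n inc v).idxOf (Sum.inl e) < (vertexPref m n inc v).idxOf (pC m) := by
  have hs : vertexPref m n inc v =
      (aC m :: edgesNot m n inc v) ++ (pC m :: (edgesInc m n inc v ++ [bC m])) := by
    simp [vertexPref]
  rw [hs]
  exact before_of_split (List.mem_cons_of_mem _ (by simp [edgesNot, h]))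
    (by simp [edgesNot, aC, pC])

lemma vp_p_lt_e (h : inc e v = true) :
    (vertexPref m n inc v).idxOf (pC m) < (vertexPref m n inc v).idxOf (Sum.inl e) := by
  have hs : vertexPref m n inc v =
      ((aC m :: edgesNot m n inc v) ++ [pC m]) ++ (edgesInc m n inc v ++ [bC m]) := by
    simp [vertexPref]
  rw [hs]
  exact before_of_split (by simp) (by simp [edgesNot, aC, pC, h])

lemma vp_p_lt_b :
    (vertexPref m n inc v).idxOf (pC m) < (vertexPref m n inc v).idxOf (bC m) := by
  have hs : vertexPref m n inc v =
      ((aC m :: edgesNot m n inc v) ++ [pC m]) ++ (edgesInc m n inc v ++ [bC m]) := by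
    simp [vertexPref]
  rw [hs]
  exact before_of_split (by simp) (by simp [edgesNot, aC, pC, bC])

lemma vp_cons : vertexPref m n inc v =
    aC m :: (edgesNot m n inc v ++ pC m :: (edgesInc m n inc v ++ [bC m])) := by
  simp [vertexPref]

lemma vp_a_lt_p :
    (vertexPref m n inc v).idxOf (aC m) < (vertexPref m n inc v).idxOf (pC m) := by
  rw [vp_cons]; exact cons_before (by simp [aC, pC]) _

lemma vp_a_lt_b :
    (vertexPref m n inc v).idxOf (aC m) < (vertexPref m n inc v).idxOf (bC m) := by
  rw [vp_cons]; exact cons_before (by simp [aC, bC]) _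

lemma pp'_cons : partyP' m = bC m :: (pC m :: ((allEdges m).reverse ++ [aC m])) := by
  simp [partyP']

lemma pp'_p_lt_e :
    (partyP' m).idxOf (pC m) < (partyP' m).idxOf (Sum.inl e) := by
  have hs : partyP' m = [bC m, pC m] ++ ((allEdges m).reverse ++ [aC m]) := by simp [partyP']
  rw [hs]
  exact before_of_split (by simp) (by simp [bC, pC])

lemma pp'_p_lt_a :
    (partyP' m).idxOf (pC m) < (partyP' m).idxOf (aC m) := by
  have hs : partyP' m = [bC m, pC m] ++ ((allEdges m).reverse ++ [aC m]) := by simp [partyP']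
  rw [hs]
  exact before_of_split (by simp) (by simp [bC, pC, aC])

lemma pp'_b_lt_p :
    (partyP' m).idxOf (bC m) < (partyP' m).idxOf (pC m) := by
  rw [pp'_cons]; exact cons_before (by simp [bC, pC]) _

lemma pp'_b_lt_a :
    (partyP' m).idxOf (bC m) < (partyP' m).idxOf (aC m) := by
  rw [pp'_cons]; exact cons_before (by simp [bC, aC]) _

lemma pp_e_lt_p :
    (partyP m).idxOf (Sum.inl e) < (partyP m).idxOf (pC m) := by
  unfold partyP
  exact before_of_split mem_allEdges (by simp [allEdges, pC])

lemma pp_p_lt_b :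
    (partyP m).idxOf (pC m) < (partyP m).idxOf (bC m) := by
  have hs : partyP m = (allEdges m ++ [pC m]) ++ [bC m, aC m] := by simp [partyP]
  rw [hs]
  exact before_of_split (by simp) (by simp [allEdges, pC, bC])

lemma pp_p_lt_a :
    (partyP m).idxOf (pC m) < (partyP m).idxOf (aC m) := by
  have hs : partyP m = (allEdges m ++ [pC m]) ++ [bC m, aC m] := by simp [partyP]
  rw [hs]
  exact before_of_split (by simp) (by simp [allEdges, pC, aC])

lemma pp_b_lt_a :
    (partyP m).idxOf (bC m) < (partyP m).idxOf (aC m) := by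
  have hs : partyP m = (allEdges m ++ [pC m, bC m]) ++ [aC m] := by simp [partyP]
  rw [hs]
  exact before_of_split (by simp) (by simp [allEdges, pC, aC, bC])

end Orderings
section Counting

lemma card_filter_univ {n : ℕ} (p : Fin n → Bool) :
    (Finset.univ.filter (fun v => p v = true)).card = ((List.finRange n).filter p).length := by
  rw [Finset.card_filter, Fin.sum_univ_def]
  induction (List.finRange n) with
  | nil => simp
  | cons a l ih => by_cases h : p a <;> simp [h, ih] <;> omega

variable {m n : ℕ} {inc : Fin m → Fin n → Bool} {S : Finset (Fin n)}

lemma pairN_eq (c d : Cand m) :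
    pairN (profileSwitched m n inc S) c d =
      (∑ v : Fin n,
        if (if v ∈ S then partyP m else vertexPref m n inc v).idxOf c <
           (if v ∈ S then partyP m else vertexPref m n inc v).idxOf d then 1 else 0)
      + ((if (partyP' m).idxOf c < (partyP' m).idxOf d then n else 0)
      + (if (partyP m).idxOf c < (partyP m).idxOf d then 1 else 0)) := by
  unfold pairN profileSwitched
  rw [List.map_append, List.sum_append, List.map_map, ← Fin.sum_univ_def]
  simp only [Function.comp, List.map_cons, List.map_nil, List.sum_cons, List.sum_nil, add_zero]

lemma pairN_p_inl (e : Fin m) :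
    pairN (profileSwitched m n inc S) (pC m) (Sum.inl e) =
      (Finset.univ.filter (fun v => v ∉ S ∧ inc e v = true)).card + n := by
  rw [pairN_eq]
  have h1 : ¬ (partyP m).idxOf (pC m) < (partyP m).idxOf (Sum.inl e) :=
    Nat.lt_asymm pp_e_lt_p
  rw [if_neg h1, if_pos pp'_p_lt_e]
  have hs : (∑ v : Fin n,
      if (if v ∈ S then partyP m else vertexPref m n inc v).idxOf (pC m) <
         (if v ∈ S then partyP m else vertexPref m n inc v).idxOf (Sum.inl e) then 1 else 0)
      = ∑ v : Fin n, if (v ∉ S ∧ inc e v = true) then (1:ℕ) else 0 := by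
    refine Finset.sum_congr rfl (fun v _ => ?_)
    by_cases hv : v ∈ S
    · simp [hv, h1]
    · by_cases hi : inc e v
      · simp [hv, hi, if_pos (vp_p_lt_e hi)]
      · have h2 := vp_e_lt_p (v := v) (e := e) (by simpa using hi)
        simp [hv, hi, Nat.lt_asymm h2]
  rw [hs, Finset.sum_boole]
  simp

lemma pairN_inl_p (e : Fin m) :
    pairN (profileSwitched m n inc S) (Sum.inl e) (pC m) =
      (Finset.univ.filter (fun v => ¬(v ∉ S ∧ inc e v = true))).card + 1 := by
  rw [pairN_eq]
  rw [if_neg (Nat.lt_asymm (pp'_p_lt_e (e := e))), if_pos pp_e_lt_p]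
  have hs : (∑ v : Fin n,
      if (if v ∈ S then partyP m else vertexPref m n inc v).idxOf (Sum.inl e) <
         (if v ∈ S then partyP m else vertexPref m n inc v).idxOf (pC m) then 1 else 0)
      = ∑ v : Fin n, if ¬(v ∉ S ∧ inc e v = true) then (1:ℕ) else 0 := by
    refine Finset.sum_congr rfl (fun v _ => ?_)
    by_cases hv : v ∈ S
    · simp [hv, if_pos pp_e_lt_p]
    · by_cases hi : inc e v
      · simp [hv, hi, Nat.lt_asymm (vp_p_lt_e hi)]
      · have h2 := vp_e_lt_p (v := v) (e := e) (by simpa using hi)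
        simp [hv, hi, if_pos h2]
  rw [hs, Finset.sum_boole]
  simp

lemma pairN_p_a :
    pairN (profileSwitched m n inc S) (pC m) (aC m) = S.card + (n + 1) := by
  rw [pairN_eq]
  rw [if_pos pp'_p_lt_a, if_pos pp_p_lt_a]
  have hs : (∑ v : Fin n,
      if (if v ∈ S then partyP m else vertexPref m n inc v).idxOf (pC m) <
         (if v ∈ S then partyP m else vertexPref m n inc v).idxOf (aC m) then 1 else 0)
      = ∑ v : Fin n, if v ∈ S then (1:ℕ) else 0 := by
    refine Finset.sum_congr rfl (fun v _ => ?_)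
    by_cases hv : v ∈ S
    · simp [hv, if_pos pp_p_lt_a]
    · simp [hv, Nat.lt_asymm (vp_a_lt_p (inc := inc) (v := v))]
  rw [hs, Finset.sum_boole]
  simp [Finset.filter_mem_eq_inter]

lemma pairN_p_b :
    pairN (profileSwitched m n inc S) (pC m) (bC m) = n + 1 := by
  rw [pairN_eq]
  rw [if_neg (Nat.lt_asymm (pp'_b_lt_p (m := m))), if_pos pp_p_lt_b]
  have hs : (∑ v : Fin n,
      if (if v ∈ S then partyP m else vertexPref m n inc v).idxOf (pC m) <
         (if v ∈ S then partyP m else vertexPref m n inc v).idxOf (bC m) then 1 else 0)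
      = ∑ v : Fin n, (1:ℕ) := by
    refine Finset.sum_congr rfl (fun v _ => ?_)
    by_cases hv : v ∈ S
    · simp [hv, if_pos pp_p_lt_b]
    · simp [hv, if_pos (vp_p_lt_b (inc := inc) (v := v))]
  rw [hs]
  simp

lemma pairN_a_b_le :
    pairN (profileSwitched m n inc S) (aC m) (bC m) ≤ n := by
  rw [pairN_eq]
  rw [if_neg (Nat.lt_asymm (pp'_b_lt_a (m := m))), if_neg (Nat.lt_asymm (pp_b_lt_a (m := m)))]
  have hs : (∑ v : Fin n,
      if (if v ∈ S then partyP m else vertexPref m n inc v).idxOf (aC m) <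
         (if v ∈ S then partyP m else vertexPref m n inc v).idxOf (bC m) then 1 else 0)
      ≤ ∑ _v : Fin n, (1:ℕ) := by
    refine Finset.sum_le_sum (fun v _ => ?_)
    by_cases h : (if v ∈ S then partyP m else vertexPref m n inc v).idxOf (aC m) <
         (if v ∈ S then partyP m else vertexPref m n inc v).idxOf (bC m) <;> simp [h]
  simpa using hs

lemma pairN_b_p :
    pairN (profileSwitched m n inc S) (bC m) (pC m) = n := by
  rw [pairN_eq]
  rw [if_pos (pp'_b_lt_p (m := m)), if_neg (Nat.lt_asymm (pp_p_lt_b (m := m)))]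
  have hs : (∑ v : Fin n,
      if (if v ∈ S then partyP m else vertexPref m n inc v).idxOf (bC m) <
         (if v ∈ S then partyP m else vertexPref m n inc v).idxOf (pC m) then 1 else 0)
      = ∑ _v : Fin n, (0:ℕ) := by
    refine Finset.sum_congr rfl (fun v _ => ?_)
    by_cases hv : v ∈ S
    · simp [hv, Nat.lt_asymm (pp_p_lt_b (m := m))]
    · simp [hv, Nat.lt_asymm (vp_p_lt_b (inc := inc) (v := v))]
  rw [hs]
  simp

end Counting
section MainLemmas
variable {m n : ℕ} {inc : Fin m → Fin n → Bool} {S : Finset (Fin n)}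

lemma one_le_A (hedge : ∀ e : Fin m, ((List.finRange n).filter (fun v => inc e v)).length = 2)
    (hind : ∀ e : Fin m, (S.filter (fun v => inc e v)).card ≤ 1) (e : Fin m) :
    1 ≤ (Finset.univ.filter (fun v => v ∉ S ∧ inc e v = true)).card := by
  have h2 : (Finset.univ.filter (fun v => inc e v = true)).card = 2 := by
    rw [card_filter_univ]; exact hedge e
  have hsub : Finset.univ.filter (fun v : Fin n => inc e v = true) ⊆
      S.filter (fun v => inc e v) ∪
        Finset.univ.filter (fun v => v ∉ S ∧ inc e v = true) := by
    intro v hv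
    simp only [Finset.mem_filter, Finset.mem_union, Finset.mem_univ, true_and] at hv ⊢
    by_cases hvS : v ∈ S
    · exact Or.inl ⟨hvS, hv⟩
    · exact Or.inr ⟨hvS, hv⟩
  have h3 := Finset.card_le_card hsub
  have h4 := Finset.card_union_le (S.filter (fun v => inc e v))
    (Finset.univ.filter (fun v : Fin n => v ∉ S ∧ inc e v = true))
  have h5 := hind e
  omega

lemma compl_card (e : Fin m) :
    (Finset.univ.filter (fun v : Fin n => v ∉ S ∧ inc e v = true)).card +
      (Finset.univ.filter (fun v : Fin n => ¬(v ∉ S ∧ inc e v = true))).card = n := by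
  rw [Finset.card_filter_add_card_filter_not]
  simp

end MainLemmas

/-- If `S` is an independent set of `G` of size `k` and the `k` voters of the
parties `P_v`, `v ∈ S`, switch to party `P`, then for every edge-candidate
`e_i` at most one switched voter originally preferred `p` to `e_i` (i.e. at
most one vertex of `S` is incident to `e_i`), hence `N(p, e_i) ≥ n + 1` after
the switch; moreover every `e_i` beats `p` by at most `n` after the switch, so
`p`'s Maximin score remains `n + 1`, every `e_i` has Maximin score at most `n`,
and `p` remains the unique Maximin winner. -/
theorem stmt_19 (m n k : ℕ) (hn : 1 ≤ n)
    (inc : Fin m → Fin n → Bool)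
    (hedge : ∀ e : Fin m, ((List.finRange n).filter (fun v => inc e v)).length = 2)
    (S : Finset (Fin n)) (hcard : S.card = k)
    (hind : ∀ e : Fin m, (S.filter (fun v => inc e v)).card ≤ 1) :
    (∀ e : Fin m, (S.filter (fun v => inc e v)).card ≤ 1) ∧
    (∀ e : Fin m, n + 1 ≤ pairN (profileSwitched m n inc S) (pC m) (Sum.inl e)) ∧
    (∀ e : Fin m, pairN (profileSwitched m n inc S) (Sum.inl e) (pC m) ≤ n) ∧
    maximin (profileSwitched m n inc S) (pC m) = ((n + 1 : ℕ) : ℕ∞) ∧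
    (∀ e : Fin m, maximin (profileSwitched m n inc S) (Sum.inl e) ≤ (n : ℕ∞)) ∧
    (∀ c : Cand m, c ≠ pC m →
      maximin (profileSwitched m n inc S) c <
        maximin (profileSwitched m n inc S) (pC m)) := by
  have hNpe : ∀ e : Fin m, n + 1 ≤ pairN (profileSwitched m n inc S) (pC m) (Sum.inl e) := by
    intro e
    rw [pairN_p_inl]
    have := one_le_A hedge hind e
    omega
  have hNep : ∀ e : Fin m, pairN (profileSwitched m n inc S) (Sum.inl e) (pC m) ≤ n := by
    intro e
    rw [pairN_inl_p]
    have h1 := one_le_A hedge hind e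
    have h2 := compl_card (inc := inc) (S := S) e
    omega
  have hmaxp : maximin (profileSwitched m n inc S) (pC m) = ((n + 1 : ℕ) : ℕ∞) := by
    unfold maximin
    apply le_antisymm
    · have hb : bC m ∈ Finset.univ.erase (pC m) := by
        simp [Finset.mem_erase, bC, pC]
      refine le_trans (Finset.inf_le hb) ?_
      rw [pairN_p_b]
    · refine Finset.le_inf (fun d hd => ?_)
      have hd' := (Finset.mem_erase.1 hd).1
      match d with
      | Sum.inl e => exact_mod_cast hNpe e
      | Sum.inr i =>
        fin_cases i
        · exact absurd rfl hd'
        · show ((n + 1 : ℕ) : ℕ∞) ≤ ((pairN (profileSwitched m n inc S) (pC m) (aC m) : ℕ) : ℕ∞)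
          rw [pairN_p_a]
          exact_mod_cast Nat.le_add_left _ _
        · show ((n + 1 : ℕ) : ℕ∞) ≤ ((pairN (profileSwitched m n inc S) (pC m) (bC m) : ℕ) : ℕ∞)
          rw [pairN_p_b]
  have hmaxe : ∀ e : Fin m, maximin (profileSwitched m n inc S) (Sum.inl e) ≤ (n : ℕ∞) := by
    intro e
    unfold maximin
    have hp : pC m ∈ Finset.univ.erase (Sum.inl e : Cand m) := by
      simp [Finset.mem_erase, pC]
    refine le_trans (Finset.inf_le hp) ?_
    exact_mod_cast hNep e
  refine ⟨hind, hNpe, hNep, hmaxp, hmaxe, ?_⟩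
  intro c hc
  rw [hmaxp]
  have hle : maximin (profileSwitched m n inc S) c ≤ (n : ℕ∞) := by
    match c with
    | Sum.inl e => exact hmaxe e
    | Sum.inr i =>
      fin_cases i
      · exact absurd rfl hc
      · show maximin (profileSwitched m n inc S) (aC m) ≤ (n : ℕ∞)
        unfold maximin
        have hb : bC m ∈ Finset.univ.erase (aC m) := by
          simp [Finset.mem_erase, bC, aC]
        refine le_trans (Finset.inf_le hb) ?_
        exact_mod_cast pairN_a_b_le (inc := inc) (S := S)
      · show maximin (profileSwitched m n inc S) (bC m) ≤ (n : ℕ∞)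
        unfold maximin
        have hp : pC m ∈ Finset.univ.erase (bC m) := by
          simp [Finset.mem_erase, pC, bC]
        refine le_trans (Finset.inf_le hp) ?_
        exact_mod_cast le_of_eq (pairN_b_p (inc := inc) (S := S))
  refine lt_of_le_of_lt hle ?_
  exact_mod_cast Nat.lt_succ_self n


end Stmt19
end
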